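/- arXiv:2108.02190 — 7 statements merged into one kernel-verified Lean document; each statement's English description precedes it below -/
import Mathlib

section
/- Let G be a countable abelian group and let E ⊆ G be an I₀ set. If S ⊆ E − E and S is a set of Bohr recurrence, then S is a set of chromatic recurrence. -/
open Pointwise

/-- `S` is a set of Bohr recurrence: for every `d`, every homomorphism `ρ : G → 𝕋^d`, and
every `ε > 0`, there is `s ∈ S` with `‖ρ(s)‖ < ε` (max over coordinates of the distance
to the nearest integer). -/
def BohrRecurrent {G : Type*} [AddCommGroup G] (S : Set G) : Prop :=
  ∀ (d : ℕ) (ρ : G →+ (Fin d → AddCircle (1 : ℝ))) (ε : ℝ), 0 < ε →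
    ∃ s ∈ S, ∀ i : Fin d, ‖ρ s i‖ < ε

/-- `S` is a set of chromatic recurrence: for every `r` and every `f : G → {1,…,r}` there
are `a, b ∈ G` with `f a = f b` and `b - a ∈ S`. -/
def ChromaticRecurrent {G : Type*} [AddCommGroup G] (S : Set G) : Prop :=
  ∀ (r : ℕ) (f : G → Fin r), ∃ a b : G, f a = f b ∧ b - a ∈ S

/-- `χ : G → ℂ` is a character: a homomorphism into the unit circle. -/
def IsChar {G : Type*} [AddCommGroup G] (χ : G → ℂ) : Prop :=
  (∀ g, ‖χ g‖ = 1) ∧ ∀ a b, χ (a + b) = χ a * χ b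

/-- A trigonometric polynomial: a finite linear combination of characters. -/
def IsTrigPoly {G : Type*} [AddCommGroup G] (p : G → ℂ) : Prop :=
  ∃ (n : ℕ) (c : Fin n → ℂ) (χ : Fin n → G → ℂ),
    (∀ i, IsChar (χ i)) ∧ ∀ g, p g = ∑ i, c i * χ i g

/-- `ψ` is almost periodic: a uniform limit of trigonometric polynomials. -/
def IsAlmostPeriodic {G : Type*} [AddCommGroup G] (ψ : G → ℂ) : Prop :=
  ∀ ε : ℝ, 0 < ε → ∃ p : G → ℂ, IsTrigPoly p ∧ ∀ g, ‖ψ g - p g‖ ≤ ε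

/-- `E` is an `I₀` set: every bounded function on `E` is the restriction of an almost
periodic function on `G`. -/
def IsI0Set {G : Type*} [AddCommGroup G] (E : Set G) : Prop :=
  ∀ f : G → ℂ, (∃ C : ℝ, ∀ x ∈ E, ‖f x‖ ≤ C) →
    ∃ ψ : G → ℂ, IsAlmostPeriodic ψ ∧ ∀ x ∈ E, ψ x = f x

/-- `B` is a Bohr neighborhood of `0`. -/
def IsBohrNhdZero {G : Type*} [AddCommGroup G] (B : Set G) : Prop :=
  ∃ (d : ℕ) (ρ : G →+ (Fin d → AddCircle (1 : ℝ))) (V : Set (Fin d → AddCircle (1 : ℝ))),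
    IsOpen V ∧ (0 : Fin d → AddCircle (1 : ℝ)) ∈ V ∧ ρ ⁻¹' V ⊆ B

/-- `Δ₂(A) = {(a-b)-(c-d) : a,b,c,d ∈ A mutually distinct}`. -/
def Delta2 {G : Type*} [AddCommGroup G] (A : Set G) : Set G :=
  {x | ∃ a b c d : G, a ∈ A ∧ b ∈ A ∧ c ∈ A ∧ d ∈ A ∧
    a ≠ b ∧ a ≠ c ∧ a ≠ d ∧ b ≠ c ∧ b ≠ d ∧ c ≠ d ∧ x = (a - b) - (c - d)}


section AuxLemmasForStmt0

open Complex

private lemma rep_exists' (x : AddCircle (1:ℝ)) :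
    ∃ y : ℝ, (y : AddCircle (1:ℝ)) = x ∧ |y| = ‖x‖ := by
  induction x using QuotientAddGroup.induction_on with
  | H z =>
    refine ⟨z - round z, ?_, ?_⟩
    · rw [QuotientAddGroup.eq]
      exact AddSubgroup.mem_zmultiples_iff.2 ⟨round z, by simp [zsmul_eq_mul]⟩
    · rw [AddCircle.norm_eq]; norm_num

private lemma char_hom' {G : Type*} [AddCommGroup G] {χ : G → ℂ} (h : IsChar χ) :
    ∃ ρ : G →+ AddCircle (1:ℝ), ∀ g, (AddCircle.toCircle (ρ g) : ℂ) = χ g := by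
  have hmem : ∀ g, χ g ∈ Metric.sphere (0:ℂ) 1 := fun g =>
    mem_sphere_zero_iff_norm.2 (by exact h.1 g)
  let e : G → Circle := fun g => ⟨χ g, hmem g⟩
  let ρ₀ : G → AddCircle (1:ℝ) := fun g => (AddCircle.homeomorphCircle one_ne_zero).symm (e g)
  have htc : ∀ g, AddCircle.toCircle (ρ₀ g) = e g := fun g => by
    rw [← AddCircle.homeomorphCircle_apply one_ne_zero, Homeomorph.apply_symm_apply]
  have hadd : ∀ a b, ρ₀ (a + b) = ρ₀ a + ρ₀ b := fun a b =>
    AddCircle.injective_toCircle one_ne_zero (by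
      rw [AddCircle.toCircle_add, htc, htc, htc]
      ext
      push_cast [e]
      exact h.2 a b)
  exact ⟨AddMonoidHom.mk' ρ₀ hadd, fun g => by
    show ((AddCircle.toCircle (ρ₀ g)) : ℂ) = χ g
    rw [htc g]⟩

private lemma toCircle_near_one' {x : AddCircle (1:ℝ)} {ε : ℝ} (hx : ‖x‖ < ε) (hε : ε ≤ 1/8) :
    ‖(AddCircle.toCircle x : ℂ) - 1‖ ≤ 16 * ε := by
  obtain ⟨y, hyx, hy⟩ := rep_exists' x
  subst hyx
  rw [AddCircle.toCircle_apply_mk, Circle.coe_exp]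
  have habs : ‖(2 * Real.pi / 1 * y : ℝ) * Complex.I‖ = 2 * Real.pi * |y| := by
    rw [div_one, norm_mul, Complex.norm_I, mul_one, Complex.norm_real, Real.norm_eq_abs, abs_mul,
      abs_of_pos Real.two_pi_pos]
  have hπ : 2 * Real.pi ≤ 8 := by nlinarith [Real.pi_le_four]
  have hy' : |y| < ε := hy ▸ hx
  have h1 : ‖(2 * Real.pi / 1 * y : ℝ) * Complex.I‖ ≤ 1 := by
    rw [habs]; nlinarith [abs_nonneg y, Real.two_pi_pos]
  calc ‖Complex.exp ((2 * Real.pi / 1 * y : ℝ) * Complex.I) - 1‖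
      ≤ 2 * ‖(2 * Real.pi / 1 * y : ℝ) * Complex.I‖ := Complex.norm_exp_sub_one_le h1
    _ = 2 * (2 * Real.pi * |y|) := by rw [habs]
    _ ≤ 16 * ε := by nlinarith [abs_nonneg y, Real.two_pi_pos]

private lemma ap_shift' {G : Type*} [AddCommGroup G] {S : Set G} (hB : BohrRecurrent S)
    {ψ : G → ℂ} (hψ : IsAlmostPeriodic ψ) {ε : ℝ} (hε : 0 < ε) :
    ∃ s ∈ S, ∀ g, ‖ψ (g + s) - ψ g‖ ≤ ε := by
  obtain ⟨p, ⟨n, c, χ, hχ, hp⟩, hpψ⟩ := hψ (ε/4) (by linarith)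
  set M := ∑ i, ‖c i‖ with hM
  have hM0 : 0 ≤ M := Finset.sum_nonneg fun i _ => norm_nonneg _
  set δ := ε / (8 * (M + 1)) with hδ
  have hδ0 : 0 < δ := by positivity
  choose ρ hρ using fun i => char_hom' (hχ i)
  let P : G →+ (Fin n → AddCircle (1:ℝ)) :=
    AddMonoidHom.mk' (fun g i => ρ i g) (by intro a b; funext i; simp)
  have hε' : 0 < min (δ/8) (1/8) := by positivity
  obtain ⟨s, hsS, hs⟩ := hB n P _ hε'
  have hχs : ∀ i, ‖χ i s - 1‖ ≤ 2 * δ := by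
    intro i
    have h1 : ‖ρ i s‖ < min (δ/8) (1/8) := hs i
    have h2 := toCircle_near_one' h1 (min_le_right _ _)
    rw [hρ i s] at h2
    calc ‖χ i s - 1‖ ≤ 16 * min (δ/8) (1/8) := h2
      _ ≤ 16 * (δ/8) := by
          have := min_le_left (δ/8) (1/8); linarith
      _ = 2 * δ := by ring
  refine ⟨s, hsS, fun g => ?_⟩
  have key : ‖p (g + s) - p g‖ ≤ 2 * δ * M := by
    have heq : p (g + s) - p g = ∑ i, c i * χ i g * (χ i s - 1) := by
      rw [hp, hp, ← Finset.sum_sub_distrib]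
      exact Finset.sum_congr rfl fun i _ => by rw [(hχ i).2 g s]; ring
    rw [heq]
    calc ‖∑ i, c i * χ i g * (χ i s - 1)‖
        ≤ ∑ i, ‖c i * χ i g * (χ i s - 1)‖ := norm_sum_le _ _
      _ ≤ ∑ i, ‖c i‖ * (2 * δ) := Finset.sum_le_sum fun i _ => by
          rw [norm_mul, norm_mul, (hχ i).1 g, mul_one]
          exact mul_le_mul_of_nonneg_left (hχs i) (norm_nonneg _)
      _ = 2 * δ * M := by rw [← Finset.sum_mul, hM]; ring
  have hδ' : δ * (8 * (M + 1)) = ε := by rw [hδ]; field_simp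
  have h3 : 2 * δ * M ≤ ε / 4 := by nlinarith
  have hsplit : ψ (g + s) - ψ g =
      (ψ (g + s) - p (g + s)) + (p (g + s) - p g) + (p g - ψ g) := by ring
  have h4 : ‖p g - ψ g‖ ≤ ε / 4 := by
    rw [← neg_sub, norm_neg]; exact hpψ g
  calc ‖ψ (g + s) - ψ g‖
      ≤ ‖(ψ (g + s) - p (g + s)) + (p (g + s) - p g)‖ + ‖p g - ψ g‖ := by
        rw [hsplit]; exact norm_add_le _ _
    _ ≤ ‖ψ (g + s) - p (g + s)‖ + ‖p (g + s) - p g‖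
        + ‖p g - ψ g‖ := by
        have := norm_add_le (ψ (g + s) - p (g + s)) (p (g + s) - p g); linarith
    _ ≤ ε/4 + ε/4 + ε/4 := by
        have := hpψ (g + s); linarith
    _ ≤ ε := by linarith

end AuxLemmasForStmt0

/-- If `G` is a countable abelian group, `E ⊆ G` is an `I₀` set, `S ⊆ E - E`, and `S` is a
set of Bohr recurrence, then `S` is a set of chromatic recurrence. -/
theorem stmt_0 {G : Type*} [AddCommGroup G] [Countable G] (E S : Set G)
    (hE : IsI0Set E) (hSE : S ⊆ E - E) (hBohr : BohrRecurrent S) :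
    ChromaticRecurrent S := by
  intro r f
  obtain ⟨ψ, hap, hres⟩ := hE (fun g => ((f g : ℕ) : ℂ))
    ⟨r, fun x _ => by rw [Complex.norm_natCast]; exact_mod_cast (f x).isLt.le⟩
  obtain ⟨s, hsS, hs⟩ := ap_shift' hBohr hap (show (0:ℝ) < 1/2 by norm_num)
  obtain ⟨x, hx, y, hy, hxy⟩ := hSE hsS
  have hxy' : x - y = s := hxy
  refine ⟨y, x, ?_, by rw [hxy']; exact hsS⟩
  have h1 := hs y
  have hyx : y + s = x := by rw [← hxy']; abel
  rw [hyx, hres x hx, hres y hy] at h1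
  have h2 : |((f x : ℕ) : ℝ) - ((f y : ℕ) : ℝ)| ≤ 1/2 := by
    rw [← Real.norm_eq_abs, ← Complex.norm_real]
    push_cast
    exact h1
  have hval : (f x : ℕ) = (f y : ℕ) := by
    by_contra hne
    have hz : ((f x : ℕ) : ℤ) ≠ ((f y : ℕ) : ℤ) := by exact_mod_cast hne
    have h3 : (1:ℤ) ≤ |((f x : ℕ) : ℤ) - ((f y : ℕ) : ℤ)| := Int.one_le_abs (sub_ne_zero.2 hz)
    have h4 : (1:ℝ) ≤ |((f x : ℕ) : ℝ) - ((f y : ℕ) : ℝ)| := by exact_mod_cast h3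
    linarith
  exact (Fin.ext hval.symm : f y = f x)
end

section
/- Let p be a prime, let 𝓕 be a collection of subsets of ℕ each having cardinality p, and let 𝓔(𝓕) := {e_F : F ∈ 𝓕} ⊆ 𝔽_p^ω. Then 𝓔(𝓕) is a set of Bohr recurrence if and only if 𝓕 is partition regular. -/
open Pointwise

/-- For a finite `F ⊆ ℕ`, `e_F := ∑_{n ∈ F} e_n` in `𝔽_p^ω = ⨁_{n ∈ ℕ} ℤ/pℤ`
(finitely supported sequences valued in `ℤ/pℤ`). -/
noncomputable def eFp (p : ℕ) (F : Finset ℕ) : ℕ →₀ ZMod p :=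
  ∑ n ∈ F, Finsupp.single n (1 : ZMod p)

/-- `𝓔_d^{(p)} = {e_F : F ⊆ ℕ, |F| = d}`. -/
def Ed (p d : ℕ) : Set (ℕ →₀ ZMod p) :=
  {x | ∃ F : Finset ℕ, F.card = d ∧ x = eFp p F}

/-- `𝓕` is partition regular: every finite coloring of `ℕ` has a monochromatic member of
`𝓕`. -/
def PartitionRegular (F : Set (Finset ℕ)) : Prop :=
  ∀ (r : ℕ) (c : ℕ → Fin r), ∃ A ∈ F, ∃ i : Fin r, ∀ n ∈ A, c n = i

/-- The canonical embedding `ZMod p →+ 𝕋` sending `k` to `k/p`. -/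
noncomputable def phiZ (p : ℕ) : ZMod p →+ AddCircle (1 : ℝ) :=
  ZMod.lift p ⟨zmultiplesHom (AddCircle (1 : ℝ)) ((((p : ℝ)⁻¹ : ℝ)) : AddCircle (1 : ℝ)), by
    rcases eq_or_ne p 0 with h | h
    · simp [h]
    · have hp : (p : ℝ) ≠ 0 := Nat.cast_ne_zero.mpr h
      simp only [zmultiplesHom_apply, ← AddCircle.coe_zsmul]
      rw [show ((p : ℤ) • ((p : ℝ)⁻¹)) = (1 : ℝ) by
        rw [zsmul_eq_mul]; push_cast; exact mul_inv_cancel₀ hp]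
      exact AddCircle.coe_period (p := (1:ℝ))⟩

lemma phiZ_intCast (p : ℕ) (n : ℤ) :
    phiZ p (n : ZMod p) = (((n : ℝ) * (p : ℝ)⁻¹ : ℝ) : AddCircle (1 : ℝ)) := by
  rw [phiZ, ZMod.lift_coe]
  simp only [zmultiplesHom_apply, ← AddCircle.coe_zsmul]
  congr 1
  rw [zsmul_eq_mul]

lemma phiZ_eq_zero_of_norm_lt {p : ℕ} (hp0 : p ≠ 0) {k : ZMod p}
    (h : ‖phiZ p k‖ < (p : ℝ)⁻¹) : k = 0 := by
  haveI : NeZero p := ⟨hp0⟩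
  by_contra hk
  have hkv : (((k.val : ℤ)) : ZMod p) = k := by
    push_cast
    exact ZMod.natCast_rightInverse k
  rw [← hkv, phiZ_intCast, AddCircle.norm_eq] at h
  simp only [inv_one, one_mul, mul_one] at h
  set v : ℕ := k.val with hv
  set m : ℤ := round ((v : ℝ) * (p : ℝ)⁻¹) with hm
  have hp' : (0 : ℝ) < p := by
    exact_mod_cast Nat.pos_of_ne_zero hp0
  have h2 : |(v : ℝ) - m * p| < 1 := by
    have heq : |(v : ℝ) - m * p| = |(v : ℝ) * (p : ℝ)⁻¹ - m| * p := by
      rw [← abs_of_pos hp', ← abs_mul]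
      congr 1
      field_simp
      rw [abs_of_pos hp']; ring
    rw [heq]
    calc |(v : ℝ) * (p : ℝ)⁻¹ - m| * p < (p : ℝ)⁻¹ * p :=
          mul_lt_mul_of_pos_right h hp'
      _ = 1 := inv_mul_cancel₀ hp'.ne'
  have h3 : ((v : ℤ) - m * p) = 0 := by
    have : |((v : ℤ) - m * p)| < 1 := by
      exact_mod_cast (by push_cast; exact h2 : |(((v : ℤ) - m * (p : ℤ) : ℤ) : ℝ)| < 1)
    exact Int.abs_lt_one_iff.mp this
  have hdvd : (p : ℤ) ∣ (v : ℤ) := ⟨m, by linarith [mul_comm m (p : ℤ)]⟩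
  have hdvd' : p ∣ v := Int.ofNat_dvd.mp hdvd
  have hvlt : v < p := ZMod.val_lt k
  have hv0 : v ≠ 0 := fun h0 => hk ((ZMod.val_eq_zero k).mp h0)
  exact absurd (Nat.le_of_dvd (Nat.pos_of_ne_zero hv0) hdvd') (not_le.mpr hvlt)

lemma exists_phiZ {p : ℕ} (hp0 : p ≠ 0) {x : AddCircle (1 : ℝ)} (hx : p • x = 0) :
    ∃ k : ZMod p, phiZ p k = x := by
  induction x using QuotientAddGroup.induction_on with
  | H r =>
    rw [show (p • ((r : ℝ) : AddCircle (1 : ℝ))) = (((p • r : ℝ)) : AddCircle (1 : ℝ)) from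
      (AddCircle.coe_nsmul _).symm, AddCircle.coe_eq_zero_iff] at hx
    obtain ⟨n, hn⟩ := hx
    refine ⟨(n : ZMod p), ?_⟩
    rw [phiZ_intCast]
    congr 1
    have hp' : (p : ℝ) ≠ 0 := Nat.cast_ne_zero.mpr hp0
    have hnr : (n : ℝ) = p * r := by
      simpa using hn
    rw [hnr, mul_comm (p : ℝ) r, mul_assoc, mul_inv_cancel₀ hp', mul_one]

/-- For a prime `p` and a collection `𝓕` of `p`-element subsets of `ℕ`, the set
`𝓔(𝓕) = {e_F : F ∈ 𝓕} ⊆ 𝔽_p^ω` is Bohr recurrent iff `𝓕` is partition regular. -/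
theorem stmt_11 (p : ℕ) (hp : p.Prime) (F : Set (Finset ℕ)) (hF : ∀ A ∈ F, A.card = p) :
    BohrRecurrent {x : ℕ →₀ ZMod p | ∃ A ∈ F, x = eFp p A} ↔ PartitionRegular F := by
  have hp0 : p ≠ 0 := hp.ne_zero
  haveI : NeZero p := ⟨hp0⟩
  have hpR : (0 : ℝ) < (p : ℝ)⁻¹ := inv_pos.mpr (by exact_mod_cast hp.pos)
  constructor
  · intro hB r c
    by_cases hr : r = 0
    · subst hr; exact (c 0).elim0
    let η : (ℕ →₀ ZMod p) →+ (Fin r → ZMod p) :=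
      Finsupp.liftAddHom fun n => AddMonoidHom.single (fun _ : Fin r => ZMod p) (c n)
    let ρ : (ℕ →₀ ZMod p) →+ (Fin r → AddCircle (1 : ℝ)) :=
      ((phiZ p).compLeft (Fin r)).comp η
    obtain ⟨s, hs, hsmall⟩ := hB r ρ _ hpR
    obtain ⟨A, hA, rfl⟩ := hs
    have hρ : ∀ i, ρ (eFp p A) i
        = phiZ p ((((A.filter fun n => c n = i).card : ℕ)) : ZMod p) := by
      intro i
      have h1 : ρ (eFp p A) i = ∑ n ∈ A, phiZ p (Pi.single (M := fun _ : Fin r => ZMod p) (c n) (1 : ZMod p) i) := by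
        rw [eFp, map_sum, Finset.sum_apply]
        refine Finset.sum_congr rfl fun n _ => ?_
        simp [ρ, η, Finsupp.liftAddHom_apply_single]
      rw [h1, ← map_sum]
      congr 1
      have h2 : ∀ n, (Pi.single (M := fun _ : Fin r => ZMod p) (c n) (1 : ZMod p)) i = if c n = i then (1 : ZMod p) else 0 := by
        intro n
        rw [Pi.single_apply]
        exact if_congr eq_comm rfl rfl
      rw [Finset.sum_congr rfl fun n _ => h2 n, Finset.sum_boole]
    have hd : ∀ i, p ∣ (A.filter fun n => c n = i).card := fun i =>
      (ZMod.natCast_eq_zero_iff _ _).mp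
        (phiZ_eq_zero_of_norm_lt hp0 (by rw [← hρ i]; exact hsmall i))
    have hsum : (∑ i : Fin r, (A.filter fun n => c n = i).card) = A.card :=
      (Finset.card_eq_sum_card_fiberwise fun x _ => Finset.mem_univ (c x)).symm
    have hAp : A.card = p := hF A hA
    have hex : ∃ i, (A.filter fun n => c n = i).card ≠ 0 := by
      by_contra h
      push_neg at h
      rw [Finset.sum_eq_zero fun i _ => h i] at hsum
      exact hp0 (by omega)
    obtain ⟨i, hi⟩ := hex
    have hle : p ≤ (A.filter fun n => c n = i).card :=
      Nat.le_of_dvd (Nat.pos_of_ne_zero hi) (hd i)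
    have hge : (A.filter fun n => c n = i).card ≤ A.card := Finset.card_filter_le _ _
    have heq : A.filter (fun n => c n = i) = A :=
      Finset.eq_of_subset_of_card_le (Finset.filter_subset _ _) (by omega)
    refine ⟨A, hA, i, fun n hn => ?_⟩
    rw [← heq] at hn
    exact (Finset.mem_filter.mp hn).2
  · intro hPR d ρ ε hε
    have tor : ∀ n, p • ρ (Finsupp.single n (1 : ZMod p)) = 0 := by
      intro n
      have h1 : p • Finsupp.single n (1 : ZMod p) = Finsupp.single n ((p : ZMod p) * 1) := by
        rw [← nsmul_eq_mul]
        have := (Finsupp.singleAddHom n (M := ZMod p)).map_nsmul p (1 : ZMod p)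
        simpa using this
      rw [← map_nsmul, h1, ZMod.natCast_self, zero_mul, Finsupp.single_zero, map_zero]
    have tor' : ∀ n i, p • (ρ (Finsupp.single n (1 : ZMod p)) i) = 0 := by
      intro n i
      have := congrFun (tor n) i
      simpa using this
    choose k hk using fun n i => exists_phiZ hp0 (tor' n i)
    let e := Fintype.equivFin (Fin d → ZMod p)
    obtain ⟨A, hA, i₀, hmono⟩ := hPR _ fun n => e (k n)
    refine ⟨eFp p A, ⟨A, hA, rfl⟩, fun i => ?_⟩
    have hAp : A.card = p := hF A hA
    obtain ⟨n₀, hn₀⟩ := Finset.card_pos.mp (by rw [hAp]; exact hp.pos)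
    have hconst : ∀ n ∈ A,
        ρ (Finsupp.single n (1 : ZMod p)) = ρ (Finsupp.single n₀ (1 : ZMod p)) := by
      intro n hn
      have hkeq : k n = k n₀ := e.injective (by rw [hmono n hn, hmono n₀ hn₀])
      funext j
      rw [← hk n j, ← hk n₀ j, hkeq]
    have h2 : ρ (eFp p A) = p • ρ (Finsupp.single n₀ (1 : ZMod p)) := by
      rw [eFp, map_sum, Finset.sum_congr rfl hconst, Finset.sum_const, hAp]
    rw [h2]
    have h3 : (p • ρ (Finsupp.single n₀ (1 : ZMod p))) i = 0 := by
      have := tor' n₀ i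
      simpa using this
    rw [h3]
    simpa using hε
end

section
/- Fix an odd prime p. Suppose that for every collection 𝓕 of p-element subsets of ℕ such that the p-uniform hypergraph with vertex set ℕ and edge set 𝓕 has infinite chromatic number, the Cayley graph Cay(𝔽_p^ω, 𝓔(𝓕)) has infinite chromatic number. Then every subset of 𝔽_p^ω which is a set of Bohr recurrence is a set of chromatic recurrence. -/
open Pointwise

/-- The Cayley graph on `G` determined by `S`: distinct `g, g'` are adjacent iff
`g - g' ∈ S` or `g' - g ∈ S`. -/
def cayleyGraph {G : Type*} [AddCommGroup G] (S : Set G) : SimpleGraph G :=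
  SimpleGraph.fromRel fun g g' => g - g' ∈ S

namespace S13
open Complex

noncomputable def om (p : ℕ) : ℂ := Complex.exp (2 * Real.pi * I / p)

lemma om_pow_p {p : ℕ} (hp : 0 < p) : om p ^ p = 1 := by
  rw [om, ← Complex.exp_nat_mul]
  rw [mul_div_assoc', mul_comm, mul_div_assoc, div_self (by exact_mod_cast hp.ne' : (p:ℂ) ≠ 0), mul_one]
  exact Complex.exp_two_pi_mul_I

lemma om_pow_mod {p : ℕ} (hp : 0 < p) (n : ℕ) : om p ^ (n % p) = om p ^ n := by
  conv_rhs => rw [← Nat.mod_add_div n p]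
  rw [pow_add, pow_mul, om_pow_p hp, one_pow, mul_one]

lemma om_ne_one {p : ℕ} (hp : 2 ≤ p) : om p ≠ 1 := by
  intro hom
  rw [om, Complex.exp_eq_one_iff] at hom
  obtain ⟨n, hn⟩ := hom
  have h2 : (2 * Real.pi * I : ℂ) ≠ 0 := by
    simp [Real.pi_ne_zero, Complex.I_ne_zero]
  have hp0 : (p : ℂ) ≠ 0 := by
    have : (0:ℕ) < p := by omega
    exact_mod_cast this.ne'
  have hn2 : 2 * (Real.pi:ℂ) * I = n * (2 * Real.pi * I) * (p:ℂ) := (div_eq_iff hp0).mp hn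
  have hmc : (2 * (Real.pi:ℂ) * I) * 1 = (2 * (Real.pi:ℂ) * I) * ((n:ℂ) * (p:ℂ)) := by
    linear_combination hn2
  have : (1 : ℂ) = n * p := mul_left_cancel₀ h2 hmc
  have : (1 : ℤ) = n * p := by exact_mod_cast this
  have := Int.eq_one_of_mul_eq_one_left (by positivity) this.symm
  omega

lemma abs_om (p : ℕ) : ‖om p‖ = 1 := by
  rw [om]
  rw [show (2 * Real.pi * I / p : ℂ) = (2 * Real.pi / p : ℝ) * I by push_cast; ring]
  exact Complex.norm_exp_ofReal_mul_I _

noncomputable def ch (p : ℕ) (t : ZMod p) : ℂ := om p ^ t.val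

lemma ch_zero {p : ℕ} (hp : 0 < p) : ch p 0 = 1 := by
  haveI : NeZero p := ⟨hp.ne'⟩
  simp [ch, ZMod.val_zero]

lemma ch_add {p : ℕ} (hp : 0 < p) (a b : ZMod p) : ch p (a + b) = ch p a * ch p b := by
  haveI : NeZero p := ⟨hp.ne'⟩
  rw [ch, ch, ch, ← pow_add, ZMod.val_add, om_pow_mod hp]

lemma abs_ch {p : ℕ} (t : ZMod p) : ‖ch p t‖ = 1 := by
  rw [ch, norm_pow, abs_om, one_pow]

lemma ch_ne_zero {p : ℕ} (t : ZMod p) : ch p t ≠ 0 := by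
  intro h
  have := abs_ch t
  rw [h] at this; simp at this

lemma ch_mul_ch_neg {p : ℕ} (hp : 0 < p) (t : ZMod p) : ch p t * ch p (-t) = 1 := by
  rw [← ch_add hp, add_neg_cancel, ch_zero hp]

lemma conj_ch {p : ℕ} (hp : 0 < p) (t : ZMod p) : (starRingEnd ℂ) (ch p t) = ch p (-t) := by
  have h1 : ch p t * (starRingEnd ℂ) (ch p t) = 1 := by
    rw [Complex.mul_conj]
    norm_cast
    rw [← Complex.sq_norm, abs_ch, one_pow]
  have h2 := ch_mul_ch_neg hp t
  exact mul_left_cancel₀ (ch_ne_zero t) (by rw [h1, h2])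

lemma ch_one_ne_one {p : ℕ} (hp : 2 ≤ p) : ch p 1 ≠ 1 := by
  haveI : NeZero p := ⟨by omega⟩
  rw [ch, ZMod.val_one_eq_one_mod]
  rw [Nat.mod_eq_of_lt (by omega), pow_one]
  exact om_ne_one hp

lemma sum_ch {p : ℕ} [NeZero p] (hp : 2 ≤ p) : ∑ t : ZMod p, ch p t = 0 := by
  have key : ∑ t : ZMod p, ch p (t + 1) = (∑ t : ZMod p, ch p t) * ch p 1 := by
    rw [Finset.sum_mul]
    exact Finset.sum_congr rfl fun t _ => ch_add (by omega) t 1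
  rw [show (∑ t : ZMod p, ch p (t + 1)) = ∑ t : ZMod p, ch p t from
    Fintype.sum_equiv (Equiv.addRight (1 : ZMod p)) (fun t => ch p (t + 1)) (ch p) (fun x => rfl)] at key
  have := sub_eq_zero.mpr key.symm
  rw [← mul_one (∑ t : ZMod p, ch p t), mul_assoc, one_mul, ← mul_sub] at this
  rcases mul_eq_zero.mp this with h | h
  · exact h
  · exact absurd (sub_eq_zero.mp h) (ch_one_ne_one hp)



variable {p : ℕ}

section Fourier

variable (p) [Fact p.Prime]
variable (W : Type) [AddCommGroup W] [Module (ZMod p) W] [Fintype W] [DecidableEq W]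

noncomputable instance dualFintype : Fintype (Module.Dual (ZMod p) W) :=
  Fintype.ofInjective DFunLike.coe DFunLike.coe_injective

variable {p W}

lemma pPos : 0 < p := (Fact.out : p.Prime).pos
lemma p2 : 2 ≤ p := (Fact.out : p.Prime).two_le

lemma ch_sum {ι : Type*} (s : Finset ι) (f : ι → ZMod p) :
    ch p (∑ i ∈ s, f i) = ∏ i ∈ s, ch p (f i) := by
  classical
  induction s using Finset.cons_induction with
  | empty => simpa using ch_zero (pPos (p := p))
  | cons a s ha ih =>
      rw [Finset.sum_cons, Finset.prod_cons, ch_add (pPos (p := p)), ih]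

lemma exists_dual_ne {z : W} (hz : z ≠ 0) : ∃ ψ : Module.Dual (ZMod p) W, ψ z = 1 := by
  let b := Module.Basis.ofVectorSpace (ZMod p) W
  have hr : b.repr z ≠ 0 := fun hrz => hz (by
    have := congrArg b.repr.symm hrz
    simpa using this)
  obtain ⟨j, hj⟩ := Finsupp.ne_iff.mp hr
  simp only [Finsupp.coe_zero, Pi.zero_apply] at hj
  refine ⟨((b.repr z j)⁻¹) • b.coord j, ?_⟩
  simp only [LinearMap.smul_apply, Module.Basis.coord_apply, smul_eq_mul]
  field_simp
lemma card_dual : Fintype.card (Module.Dual (ZMod p) W) = Fintype.card W := by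
  let b := Module.finBasis (ZMod p) W
  have e1 : W ≃ (Fin (Module.finrank (ZMod p) W) → ZMod p) := b.equivFun.toEquiv
  have e2 : (Fin (Module.finrank (ZMod p) W) → ZMod p) ≃ Module.Dual (ZMod p) W :=
    (b.constr (ZMod p)).toEquiv
  rw [← Fintype.card_congr e2, Fintype.card_congr e1]

lemma sum_dual_ch (z : W) :
    ∑ ψ : Module.Dual (ZMod p) W, ch p (ψ z)
      = if z = 0 then (Fintype.card (Module.Dual (ZMod p) W) : ℂ) else 0 := by
  rcases eq_or_ne z 0 with rfl | hz
  · simp only [if_pos rfl, map_zero]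
    rw [ch_zero (pPos (p := p))]
    simp [Finset.card_univ]
  · rw [if_neg hz]
    obtain ⟨ψ₀, hψ₀⟩ := exists_dual_ne (p := p) hz
    have h1 : ∑ ψ : Module.Dual (ZMod p) W, ch p ((ψ + ψ₀) z)
        = ∑ ψ : Module.Dual (ZMod p) W, ch p (ψ z) :=
      Fintype.sum_equiv (Equiv.addRight ψ₀) _ _ (fun ψ => rfl)
    have h2 : ∀ ψ : Module.Dual (ZMod p) W, ch p ((ψ + ψ₀) z) = ch p (ψ z) * ch p 1 := by
      intro ψ
      rw [LinearMap.add_apply, hψ₀, ch_add (pPos (p := p))]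
    rw [Finset.sum_congr rfl (fun ψ _ => h2 ψ), ← Finset.sum_mul] at h1
    rcases mul_eq_zero.mp (by linear_combination h1 :
        (∑ ψ : Module.Dual (ZMod p) W, ch p (ψ z)) * (ch p 1 - 1) = 0) with h | h
    · exact h
    · exact absurd (by linear_combination h) (ch_one_ne_one (p2 (p := p)))

noncomputable def SA (A : Finset W) (ψ : Module.Dual (ZMod p) W) : ℂ := ∑ a ∈ A, ch p (ψ a)

lemma SA_zero (A : Finset W) : SA A (0 : Module.Dual (ZMod p) W) = (A.card : ℂ) := by
  rw [SA]
  rw [Finset.sum_congr rfl (fun a _ => by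
    rw [LinearMap.zero_apply, ch_zero (pPos (p := p))])]
  simp

lemma parseval (A : Finset W) :
    ∑ ψ : Module.Dual (ZMod p) W, (‖SA A ψ‖)^2
      = (Fintype.card (Module.Dual (ZMod p) W) : ℝ) * A.card := by
  have hterm : ∀ ψ : Module.Dual (ZMod p) W,
      ((‖SA A ψ‖)^2 : ℂ) = SA A ψ * (starRingEnd ℂ) (SA A ψ) := by
    intro ψ
    rw [← Complex.ofReal_pow, Complex.sq_norm]
    exact (Complex.mul_conj _).symm
  have key : ∑ ψ : Module.Dual (ZMod p) W, SA A ψ * (starRingEnd ℂ) (SA A ψ)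
      = (Fintype.card (Module.Dual (ZMod p) W) : ℂ) * A.card := by
    have e1 : ∀ ψ : Module.Dual (ZMod p) W,
        SA A ψ * (starRingEnd ℂ) (SA A ψ) = ∑ a ∈ A, ∑ b ∈ A, ch p (ψ (a - b)) := by
      intro ψ
      rw [SA, map_sum, Finset.sum_mul]
      refine Finset.sum_congr rfl fun a _ => ?_
      rw [Finset.mul_sum]
      refine Finset.sum_congr rfl fun b _ => ?_
      rw [conj_ch (pPos (p := p)), ← ch_add (pPos (p := p)), map_sub, sub_eq_add_neg]
    rw [Finset.sum_congr rfl fun ψ _ => e1 ψ, Finset.sum_comm]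
    have e2 : ∀ a ∈ A, ∑ ψ : Module.Dual (ZMod p) W, ∑ b ∈ A, ch p (ψ (a - b))
        = (Fintype.card (Module.Dual (ZMod p) W) : ℂ) := by
      intro a ha
      rw [Finset.sum_comm]
      have e3 : ∀ b ∈ A, ∑ ψ : Module.Dual (ZMod p) W, ch p (ψ (a - b))
          = if a = b then (Fintype.card (Module.Dual (ZMod p) W) : ℂ) else 0 := by
        intro b _
        rw [sum_dual_ch (a - b)]
        congr 1
        simp [sub_eq_zero]
      rw [Finset.sum_congr rfl e3, Finset.sum_ite_eq A a
        (fun _ => (Fintype.card (Module.Dual (ZMod p) W) : ℂ)), if_pos ha]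
    rw [Finset.sum_congr rfl e2, Finset.sum_const, nsmul_eq_mul, mul_comm]
  have h2 := (Finset.sum_congr rfl fun ψ _ => hterm ψ).trans key
  exact_mod_cast h2

noncomputable def pcnt (pp : ℕ) (A : Finset W) (x : W) : ℕ :=
  ((Fintype.piFinset fun _ : Fin pp => A).filter fun y => ∑ i, y i = x).card

lemma count_identity (A : Finset W) (x : W) :
    ((Fintype.card (Module.Dual (ZMod p) W)) : ℂ) * pcnt p A x
      = ∑ ψ : Module.Dual (ZMod p) W, ch p (ψ (-x)) * (SA A ψ)^p := by
  have hL : ((Fintype.card (Module.Dual (ZMod p) W)) : ℂ) * pcnt p A x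
      = ∑ y ∈ Fintype.piFinset (fun _ : Fin p => A),
          if (∑ i, y i) - x = 0 then ((Fintype.card (Module.Dual (ZMod p) W)) : ℂ) else 0 := by
    rw [Finset.sum_ite, Finset.sum_const, Finset.sum_const_zero, add_zero, nsmul_eq_mul, pcnt,
      mul_comm]
    congr 3
    apply Finset.filter_congr
    intro y _
    simp [sub_eq_zero]
  rw [hL]
  have hstep : ∀ y ∈ Fintype.piFinset (fun _ : Fin p => A),
      (if (∑ i, y i) - x = 0 then ((Fintype.card (Module.Dual (ZMod p) W)) : ℂ) else 0)
        = ∑ ψ : Module.Dual (ZMod p) W, ch p (ψ ((∑ i, y i) - x)) := by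
    intro y _
    rw [sum_dual_ch]
  rw [Finset.sum_congr rfl hstep, Finset.sum_comm]
  refine Finset.sum_congr rfl fun ψ _ => ?_
  have e1 : ∀ y : Fin p → W, ch p (ψ ((∑ i, y i) - x))
      = ch p (ψ (-x)) * ∏ i, ch p (ψ (y i)) := by
    intro y
    rw [sub_eq_add_neg, add_comm, map_add, ch_add (pPos (p := p))]
    congr 1
    rw [map_sum, ch_sum]
  rw [Finset.sum_congr rfl fun y _ => e1 y, ← Finset.mul_sum]
  congr 1
  rw [← Finset.prod_univ_sum (fun _ : Fin p => A) (fun _ a => ch p (ψ a))]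
  rw [Finset.prod_const, SA]
  congr 1
  simp

lemma exists_preimage_one {ψ₀ : Module.Dual (ZMod p) W} (hψ : ψ₀ ≠ 0) :
    ∃ w₁ : W, ψ₀ w₁ = 1 := by
  have : ∃ w : W, ψ₀ w ≠ 0 := by
    by_contra hc
    push_neg at hc
    exact hψ (LinearMap.ext fun w => by rw [hc w, LinearMap.zero_apply])
  obtain ⟨w, hw⟩ := this
  refine ⟨(ψ₀ w)⁻¹ • w, ?_⟩
  rw [map_smul, smul_eq_mul, inv_mul_cancel₀ hw]

lemma fiber_card {ψ₀ : Module.Dual (ZMod p) W} {w₁ : W} (hw : ψ₀ w₁ = 1) (t : ZMod p) :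
    p * (Finset.univ.filter fun x : W => ψ₀ x = t).card = Fintype.card W := by
  haveI : NeZero p := ⟨(pPos (p := p)).ne'⟩
  have hsame : ∀ t : ZMod p, (Finset.univ.filter fun x : W => ψ₀ x = t).card
      = (Finset.univ.filter fun x : W => ψ₀ x = 0).card := by
    intro t
    apply Finset.card_bij' (fun x _ => x - t • w₁) (fun x _ => x + t • w₁)
    · intro a ha
      simp only [Finset.mem_filter, Finset.mem_univ, true_and] at ha ⊢
      rw [map_sub, ha, map_smul, hw, smul_eq_mul, mul_one, sub_self]
    · intro a ha
      simp only [Finset.mem_filter, Finset.mem_univ, true_and] at ha ⊢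
      rw [map_add, ha, map_smul, hw, smul_eq_mul, mul_one, zero_add]
    · intro a _; rw [sub_add_cancel]
    · intro a _; rw [add_sub_cancel_right]
  have htot : Fintype.card W = ∑ t : ZMod p, (Finset.univ.filter fun x : W => ψ₀ x = t).card := by
    rw [← Finset.card_univ]
    exact Finset.card_eq_sum_card_fiberwise (fun x _ => Finset.mem_univ (ψ₀ x))
  rw [htot, Finset.sum_congr rfl fun t _ => hsame t, Finset.sum_const, Finset.card_univ,
    ZMod.card, smul_eq_mul, hsame t]

lemma increment (A : Finset W) {ψ₀ : Module.Dual (ZMod p) W} (hψ : ψ₀ ≠ 0) (M : ℝ)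
    (hM : 0 < M) (hSA : M ≤ ‖SA A ψ₀‖) :
    ∃ t : ZMod p, (A.card : ℝ)/p + M/(2*p) ≤ ((A.filter fun x => ψ₀ x = t).card : ℝ) := by
  haveI : NeZero p := ⟨(pPos (p := p)).ne'⟩
  have hp0 : (0:ℝ) < p := by exact_mod_cast pPos (p := p)
  set a : ZMod p → ℝ := fun t => ((A.filter fun x => ψ₀ x = t).card : ℝ) with ha
  have htot : ∑ t : ZMod p, a t = A.card := by
    have hfib := Finset.card_eq_sum_card_fiberwise
      (f := fun x => ψ₀ x) (s := A) (t := Finset.univ) (fun x _ => Finset.mem_univ _)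
    rw [ha]
    beta_reduce
    exact_mod_cast hfib.symm
  set β : ZMod p → ℝ := fun t => a t - A.card/p with hβ
  have hβ0 : ∑ t : ZMod p, β t = 0 := by
    rw [hβ]
    rw [Finset.sum_sub_distrib, htot, Finset.sum_const, Finset.card_univ, ZMod.card, nsmul_eq_mul]
    field_simp
    ring
  have hSAf : SA A ψ₀ = ∑ t : ZMod p, (a t : ℂ) * ch p t := by
    rw [SA, ← Finset.sum_fiberwise_of_maps_to (fun x _ => Finset.mem_univ (ψ₀ x))
      (fun x => ch p (ψ₀ x))]
    refine Finset.sum_congr rfl fun t _ => ?_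
    rw [Finset.sum_congr rfl (fun x hx => by
      rw [(Finset.mem_filter.mp hx).2])]
    rw [Finset.sum_const, nsmul_eq_mul, ha]
    push_cast
    ring
  have hSAβ : SA A ψ₀ = ∑ t : ZMod p, (β t : ℂ) * ch p t := by
    rw [hSAf, hβ]
    push_cast
    rw [Finset.sum_congr rfl (fun t _ => sub_mul ((a t : ℂ)) _ _), Finset.sum_sub_distrib,
      ← Finset.mul_sum, sum_ch (p2 (p := p)), mul_zero, sub_zero]
  have habs : M ≤ ∑ t : ZMod p, |β t| := by
    calc M ≤ ‖SA A ψ₀‖ := hSA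
    _ = ‖∑ t : ZMod p, (β t : ℂ) * ch p t‖ := by rw [← hSAβ]
    _ ≤ ∑ t : ZMod p, ‖(β t : ℂ) * ch p t‖ := norm_sum_le _ _
    _ = ∑ t : ZMod p, |β t| := by
        refine Finset.sum_congr rfl fun t _ => ?_
        rw [norm_mul, abs_ch, mul_one, Complex.norm_real, Real.norm_eq_abs]
  have hpos : M/2 ≤ ∑ t : ZMod p, max (β t) 0 := by
    have : ∑ t : ZMod p, |β t| = 2 * ∑ t : ZMod p, max (β t) 0 - ∑ t : ZMod p, β t := by
      rw [Finset.mul_sum, ← Finset.sum_sub_distrib]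
      refine Finset.sum_congr rfl fun t _ => ?_
      rcases le_or_gt 0 (β t) with h | h
      · rw [_root_.abs_of_nonneg h, max_eq_left h]; ring
      · rw [_root_.abs_of_neg h, max_eq_right h.le]; ring
    rw [this, hβ0, sub_zero] at habs
    linarith
  have : ∃ t : ZMod p, M/(2*p) ≤ max (β t) 0 := by
    by_contra hc
    push_neg at hc
    have hlt : ∑ t : ZMod p, max (β t) 0 < ∑ _t : ZMod p, M/(2*p) :=
      Finset.sum_lt_sum_of_nonempty Finset.univ_nonempty (fun t _ => hc t)
    rw [Finset.sum_const, Finset.card_univ, ZMod.card, nsmul_eq_mul] at hlt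
    have : (p : ℝ) * (M/(2*p)) = M/2 := by field_simp
    rw [this] at hlt
    linarith
  obtain ⟨t, ht⟩ := this
  refine ⟨t, ?_⟩
  have hM2p : 0 < M/(2*p) := by positivity
  have : M/(2*p) ≤ β t := by
    rcases max_cases (β t) 0 with ⟨he, _⟩ | ⟨he, _⟩
    · rw [he] at ht; exact ht
    · rw [he] at ht; linarith
  rw [hβ] at this
  dsimp [a] at this
  linarith

lemma uniform_cover (A : Finset W) (M : ℝ)
    (hM : ∀ ψ : Module.Dual (ZMod p) W, ψ ≠ 0 → ‖SA A ψ‖ ≤ M) (hM0 : 0 ≤ M)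
    (hgap : M^(p-2) * (Fintype.card W) * A.card < (A.card:ℝ)^p) (x : W) :
    ∃ y : Fin p → W, (∀ i, y i ∈ A) ∧ ∑ i, y i = x := by
  classical
  set D := Fintype.card (Module.Dual (ZMod p) W) with hDdef
  have hDW : D = Fintype.card W := card_dual
  have hsplit : ((D:ℂ)) * pcnt p A x = (A.card:ℂ)^p
      + ∑ ψ ∈ (Finset.univ.erase (0 : Module.Dual (ZMod p) W)), ch p (ψ (-x)) * SA A ψ ^ p := by
    rw [count_identity, ← Finset.add_sum_erase _ _ (Finset.mem_univ 0)]
    congr 1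
    rw [SA_zero, LinearMap.zero_apply, ch_zero (pPos (p := p)), one_mul]
  have hterm : ∀ ψ : Module.Dual (ZMod p) W, ψ ≠ 0 →
      ‖ch p (ψ (-x)) * SA A ψ ^ p‖ ≤ M^(p-2) * (‖SA A ψ‖)^2 := by
    intro ψ hψ
    rw [norm_mul, abs_ch, one_mul, norm_pow]
    have hsplitp : ‖SA A ψ‖ ^ p
        = ‖SA A ψ‖ ^ (p-2) * ‖SA A ψ‖ ^ 2 := by
      rw [← pow_add, Nat.sub_add_cancel (p2 (p := p))]
    rw [hsplitp]
    exact mul_le_mul_of_nonneg_right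
      (pow_le_pow_left₀ (norm_nonneg _) (hM ψ hψ) _) (sq_nonneg _)
  have hbound : ‖∑ ψ ∈ (Finset.univ.erase (0 : Module.Dual (ZMod p) W)),
      ch p (ψ (-x)) * SA A ψ ^ p‖ ≤ M^(p-2) * (D * A.card) := by
    calc ‖∑ ψ ∈ (Finset.univ.erase (0 : Module.Dual (ZMod p) W)),
        ch p (ψ (-x)) * SA A ψ ^ p‖
        ≤ ∑ ψ ∈ (Finset.univ.erase (0 : Module.Dual (ZMod p) W)),
            ‖ch p (ψ (-x)) * SA A ψ ^ p‖ := norm_sum_le _ _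
      _ ≤ ∑ ψ ∈ (Finset.univ.erase (0 : Module.Dual (ZMod p) W)),
            M^(p-2) * (‖SA A ψ‖)^2 :=
          Finset.sum_le_sum fun ψ hψ => hterm ψ (Finset.ne_of_mem_erase hψ)
      _ ≤ ∑ ψ : Module.Dual (ZMod p) W, M^(p-2) * (‖SA A ψ‖)^2 :=
          Finset.sum_le_sum_of_subset_of_nonneg (Finset.erase_subset _ _)
            (fun ψ _ _ => by positivity)
      _ = M^(p-2) * (D * A.card) := by rw [← Finset.mul_sum, parseval]
  have habs : |(D:ℝ) * pcnt p A x - (A.card:ℝ)^p| ≤ M^(p-2) * (D * A.card) := by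
    have : ((D:ℂ)) * pcnt p A x - (A.card:ℂ)^p
        = ∑ ψ ∈ (Finset.univ.erase (0 : Module.Dual (ZMod p) W)), ch p (ψ (-x)) * SA A ψ ^ p := by
      rw [hsplit]; ring
    have h2 : ‖((((D:ℝ) * pcnt p A x - (A.card:ℝ)^p : ℝ) : ℂ))‖
        ≤ M^(p-2) * (D * A.card) := by
      push_cast
      rw [this]
      exact hbound
    rwa [Complex.norm_real, Real.norm_eq_abs] at h2
  have hpcnt : 0 < pcnt p A x := by
    by_contra hc
    push_neg at hc
    interval_cases hhh : pcnt p A x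
    · rw [hDW] at habs
      simp only [Nat.cast_zero, mul_zero, zero_sub, abs_neg] at habs
      have hA0 : (0:ℝ) ≤ (A.card:ℝ)^p := by positivity
      rw [_root_.abs_of_nonneg hA0] at habs
      linarith [hgap, habs]
  obtain ⟨y, hy⟩ := Finset.card_pos.mp hpcnt
  rw [Finset.mem_filter, Fintype.mem_piFinset] at hy
  exact ⟨y, hy.1, hy.2⟩

lemma gap_ineq (p : ℕ) (hp3 : 3 ≤ p) (α cW cA : ℝ) (hα0 : 0 < α) (hα1 : α ≤ 1)
    (hcW : 0 < cW) (hcA : 0 < cA) (hαA : α * cW ≤ cA) :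
    (α^2/2*cW)^(p-2) * cW * cA < cA^p := by
  have hstep : (α^2/2*cW)^(p-2) * cW < cA^(p-1) := by
    have e1 : (α^2/2*cW)^(p-2) * cW = (α^2/2)^(p-2) * cW^(p-1) := by
      rw [mul_pow, mul_assoc, ← pow_succ]
      congr 2
      omega
    have e2 : (α^2/2)^(p-2) < α^(p-1) := by
      have e3 : (α^2/2)^(p-2) = α^(2*(p-2)) / 2^(p-2) := by rw [div_pow, pow_mul]
      have e4 : α^(2*(p-2)) = α^(p-1) * α^(p-3) := by
        rw [← pow_add]; congr 1; omega
      have e5 : α^(p-3) ≤ 1 := pow_le_one₀ hα0.le hα1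
      have e6 : (2:ℝ) ≤ 2^(p-2) := by
        calc (2:ℝ) = 2^1 := (pow_one 2).symm
        _ ≤ 2^(p-2) := pow_le_pow_right₀ one_le_two (by omega)
      have e7 : 0 < α^(p-1) := by positivity
      have e8 : 0 < α^(p-3) := by positivity
      rw [e3, e4, div_lt_iff₀ (by positivity : (0:ℝ) < 2^(p-2))]
      nlinarith
    calc (α^2/2*cW)^(p-2) * cW = (α^2/2)^(p-2) * cW^(p-1) := e1
      _ < α^(p-1) * cW^(p-1) := mul_lt_mul_of_pos_right e2 (by positivity)
      _ = (α * cW)^(p-1) := (mul_pow _ _ _).symm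
      _ ≤ cA^(p-1) := pow_le_pow_left₀ (by positivity) hαA _
  calc (α^2/2*cW)^(p-2) * cW * cA < cA^(p-1) * cA := mul_lt_mul_of_pos_right hstep hcA
    _ = cA^p := by rw [← pow_succ]; congr 1; omega

theorem core (hp3 : 3 ≤ p) (α : ℝ) (hα0 : 0 < α) (hα1 : α ≤ 1) (T : ℕ) :
    ∀ (W : Type) [AddCommGroup W] [Module (ZMod p) W] [Fintype W] [DecidableEq W]
      (A : Finset W),
      α * (Fintype.card W : ℝ) ≤ A.card →
      (1 - T * (α^2/4)) * (Fintype.card W : ℝ) ≤ A.card →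
      ∃ φ : W →ₗ[ZMod p] (Fin T → ZMod p),
        ∀ x : W, φ x = 0 → ∃ y : Fin p → W, (∀ i, y i ∈ A) ∧ ∑ i, y i = x := by
  induction T with
  | zero =>
    intro W _ _ _ _ A hαA hTA
    have hAuniv : A = Finset.univ := by
      apply Finset.eq_univ_of_card
      have h1 : (Fintype.card W : ℝ) ≤ A.card := by
        simpa using hTA
      have h2 : Fintype.card W ≤ A.card := by exact_mod_cast h1
      have h3 := Finset.card_le_univ A
      omega
    refine ⟨0, fun x _ => ?_⟩
    have hp0 : 0 < p := by omega
    refine ⟨fun i => if i = (⟨0, hp0⟩ : Fin p) then x else 0,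
      fun i => hAuniv ▸ Finset.mem_univ _, ?_⟩
    rw [Finset.sum_ite_eq' Finset.univ (⟨0, hp0⟩ : Fin p) (fun _ => x), if_pos (Finset.mem_univ _)]
  | succ T ih =>
    intro W _ _ _ _ A hαA hTA
    have hp2 : 2 ≤ p := by omega
    have hp0R : (0:ℝ) < p := by exact_mod_cast (by omega : 0 < p)
    have hcW0 : (0:ℝ) < Fintype.card W := by exact_mod_cast Fintype.card_pos
    have hcA0 : (0:ℝ) < A.card := lt_of_lt_of_le (by positivity) hαA
    set M₀ : ℝ := α^2/2 * Fintype.card W with hM₀def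
    have hM₀pos : 0 < M₀ := by rw [hM₀def]; positivity
    by_cases hcase : ∃ ψ : Module.Dual (ZMod p) W, ψ ≠ 0 ∧ M₀ ≤ ‖SA A ψ‖
    · -- increment case
      obtain ⟨ψ₀, hψ₀, hSA₀⟩ := hcase
      obtain ⟨t, ht⟩ := increment A hψ₀ M₀ hM₀pos hSA₀
      obtain ⟨w₁, hw₁⟩ := exists_preimage_one hψ₀
      set K := LinearMap.ker ψ₀ with hKdef
      haveI : DecidablePred (fun x : W => x ∈ K) :=
        fun x => decidable_of_iff (ψ₀ x = 0) (LinearMap.mem_ker).symm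
      -- cardinalities
      have hfib := fiber_card hw₁ t
      have hKcard : Fintype.card (↥K) = (Finset.univ.filter fun x : W => ψ₀ x = t).card := by
        rw [Fintype.card_subtype]
        have h0 := fiber_card hw₁ (0 : ZMod p)
        have : (Finset.univ.filter fun x : W => x ∈ K).card
            = (Finset.univ.filter fun x : W => ψ₀ x = 0).card := by
          congr 1
          apply Finset.filter_congr
          intro x _
          simp [hKdef, LinearMap.mem_ker]
        rw [this]
        have h2 := hfib.trans h0.symm
        exact (Nat.eq_of_mul_eq_mul_left (by omega) h2).symm
      have hcKR : (Fintype.card (↥K) : ℝ) * p = Fintype.card W := by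
        rw [hKcard]
        exact_mod_cast (by rw [mul_comm] at hfib; exact_mod_cast hfib)
      have hcK0 : (0:ℝ) < Fintype.card (↥K) := by
        by_contra hc
        push_neg at hc
        nlinarith
      -- pick u₀
      have htpos : 0 < ((A.filter fun x => ψ₀ x = t).card : ℝ) := by
        have : 0 < (A.card : ℝ)/p + M₀/(2*p) := by positivity
        linarith
      have hne : (A.filter fun x => ψ₀ x = t).Nonempty := by
        rw [← Finset.card_pos]
        exact_mod_cast htpos
      obtain ⟨u₀, hu₀⟩ := hne
      have hu₀t : ψ₀ u₀ = t := (Finset.mem_filter.mp hu₀).2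
      have hu₀A : u₀ ∈ A := (Finset.mem_filter.mp hu₀).1
      -- build A' in K
      have hmemK : ∀ z ∈ A.filter fun x => ψ₀ x = t, z - u₀ ∈ K := by
        intro z hz
        rw [hKdef, LinearMap.mem_ker, map_sub, (Finset.mem_filter.mp hz).2, hu₀t, sub_self]
      set A' : Finset (↥K) := (A.filter fun x => ψ₀ x = t).attach.map
        ⟨fun z => (⟨z.1 - u₀, hmemK z.1 z.2⟩ : ↥K), by
          intro z z' hzz
          apply Subtype.ext
          have h1 : (z.1 : W) - u₀ = (z'.1 : W) - u₀ :=
            congrArg (fun w : ↥K => (w : W)) hzz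
          exact sub_left_injective h1⟩ with hA'def
      have hA'card : (A'.card : ℝ) = ((A.filter fun x => ψ₀ x = t).card : ℝ) := by
        rw [hA'def, Finset.card_map, Finset.card_attach]
      have hδ : M₀/(2*p) = α^2/4 * Fintype.card (↥K) := by
        rw [hM₀def, ← hcKR]
        field_simp
        ring
      have hδpos : 0 < M₀/(2*p) := by positivity
      have hdiv1 : α * Fintype.card (↥K) ≤ (A.card:ℝ)/p := by
        rw [le_div_iff₀ hp0R]
        calc α * (Fintype.card (↥K) : ℝ) * p = α * ((Fintype.card (↥K) : ℝ) * p) := by ring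
          _ = α * Fintype.card W := by rw [hcKR]
          _ ≤ A.card := hαA
      have hdiv2 : (1 - ((T:ℝ)+1) * (α^2/4)) * Fintype.card (↥K) ≤ (A.card:ℝ)/p := by
        rw [le_div_iff₀ hp0R]
        push_cast at hTA
        calc (1 - ((T:ℝ)+1) * (α^2/4)) * (Fintype.card (↥K) : ℝ) * p
            = (1 - ((T:ℝ)+1) * (α^2/4)) * ((Fintype.card (↥K) : ℝ) * p) := by ring
          _ = (1 - ((T:ℝ)+1) * (α^2/4)) * Fintype.card W := by rw [hcKR]
          _ ≤ A.card := hTA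
      have h1 : α * (Fintype.card (↥K) : ℝ) ≤ (A'.card : ℝ) := by
        rw [hA'card]
        linarith
      have h2 : (1 - (T:ℝ) * (α^2/4)) * (Fintype.card (↥K) : ℝ) ≤ (A'.card : ℝ) := by
        rw [hA'card]
        nlinarith [ht, hdiv2, hδ]
      obtain ⟨φ', hφ'⟩ := ih (↥K) A' h1 (by push_cast; exact h2)
      have hπmem : ∀ x : W,
          ((LinearMap.id : W →ₗ[ZMod p] W) - (LinearMap.toSpanSingleton (ZMod p) W w₁).comp ψ₀) x ∈ K := by
        intro x
        rw [hKdef, LinearMap.mem_ker]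
        simp only [LinearMap.sub_apply, LinearMap.id_apply, LinearMap.comp_apply,
          LinearMap.toSpanSingleton_apply]
        rw [map_sub, map_smul, hw₁, smul_eq_mul, mul_one, sub_self]
      set π : W →ₗ[ZMod p] ↥K := LinearMap.codRestrict K
        ((LinearMap.id : W →ₗ[ZMod p] W) - (LinearMap.toSpanSingleton (ZMod p) W w₁).comp ψ₀) hπmem with hπdef
      have hπcoe : ∀ x : W, ((π x : W)) = x - ψ₀ x • w₁ := by
        intro x
        rw [hπdef, LinearMap.codRestrict_apply]
        simp only [LinearMap.sub_apply, LinearMap.id_apply, LinearMap.comp_apply,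
          LinearMap.toSpanSingleton_apply]
      set g : Fin (T+1) → (W →ₗ[ZMod p] ZMod p) :=
        Fin.cons ψ₀ (fun j => (LinearMap.proj j).comp (φ'.comp π)) with hgdef
      refine ⟨LinearMap.pi g, fun x hx => ?_⟩
      have hx0 : ψ₀ x = 0 := by
        have h := congrFun hx (0 : Fin (T+1))
        simp only [LinearMap.pi_apply, hgdef, Fin.cons_zero, Pi.zero_apply] at h
        exact h
      have hxs : φ' (π x) = 0 := by
        funext j
        have h := congrFun hx j.succ
        simp only [LinearMap.pi_apply, hgdef, Fin.cons_succ, Pi.zero_apply,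
          LinearMap.comp_apply, LinearMap.proj_apply] at h
        exact h
      have hπx : ((π x : W)) = x := by rw [hπcoe, hx0, zero_smul, sub_zero]
      obtain ⟨y', hy'mem, hy'sum⟩ := hφ' (π x) hxs
      have hyrep : ∀ i : Fin p, ∃ z, z ∈ (A.filter fun x => ψ₀ x = t) ∧ ((y' i : W)) = z - u₀ := by
        intro i
        have hmm := hy'mem i
        rw [hA'def, Finset.mem_map] at hmm
        obtain ⟨z, hz, hze⟩ := hmm
        exact ⟨z.1, z.2, by rw [← hze]; rfl⟩
      choose z hz hze using hyrep
      refine ⟨fun i => z i, fun i => (Finset.mem_filter.mp (hz i)).1, ?_⟩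
      have hpu : (p : ℕ) • u₀ = 0 := by
        have hc : ((p : ℕ) : ZMod p) • u₀ = (p : ℕ) • u₀ := Nat.cast_smul_eq_nsmul (ZMod p) p u₀
        rw [← hc, ZMod.natCast_self, zero_smul]
      calc ∑ i, z i = ∑ i : Fin p, ((y' i : W) + u₀) := by
            refine Finset.sum_congr rfl (fun i _ => ?_)
            rw [hze i]
            abel
        _ = (∑ i : Fin p, ((y' i : W))) + ∑ _i : Fin p, u₀ := Finset.sum_add_distrib
        _ = (((∑ i, y' i : ↥K)) : W) + (p : ℕ) • u₀ := by
            rw [Finset.sum_const, Finset.card_univ, Fintype.card_fin]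
            congr 1
            exact (map_sum K.subtype y' Finset.univ).symm
        _ = x := by rw [hy'sum, hπx, hpu, add_zero]
    · -- uniform case
      push_neg at hcase
      have hM : ∀ ψ : Module.Dual (ZMod p) W, ψ ≠ 0 → ‖SA A ψ‖ ≤ M₀ :=
        fun ψ hψ => (hcase ψ hψ).le
      have hgap : M₀^(p-2) * (Fintype.card W : ℝ) * A.card < (A.card:ℝ)^p := by
        rw [hM₀def]
        exact gap_ineq p hp3 α _ _ hα0 hα1 hcW0 hcA0 hαA
      exact ⟨0, fun x _ => uniform_cover A M₀ hM hM₀pos.le hgap x⟩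




end Fourier
section Windows

variable {p : ℕ} [Fact p.Prime]

noncomputable def jW (p N : ℕ) (x : Fin N → ZMod p) : ℕ →₀ ZMod p :=
  ∑ i : Fin N, Finsupp.single (i : ℕ) (x i)

lemma jW_add (N : ℕ) (x y : Fin N → ZMod p) : jW p N (x + y) = jW p N x + jW p N y := by
  rw [jW, jW, jW, ← Finset.sum_add_distrib]
  exact Finset.sum_congr rfl fun i _ => by rw [Pi.add_apply, Finsupp.single_add]

lemma jW_zero (N : ℕ) : jW p N 0 = 0 := by simp [jW]

lemma jW_sum {ι : Type*} (N : ℕ) (s : Finset ι) (f : ι → (Fin N → ZMod p)) :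
    jW p N (∑ i ∈ s, f i) = ∑ i ∈ s, jW p N (f i) := by
  classical
  induction s using Finset.cons_induction with
  | empty => simpa using jW_zero N
  | cons a s ha ih => rw [Finset.sum_cons, Finset.sum_cons, jW_add, ih]

lemma jW_apply (N : ℕ) (x : Fin N → ZMod p) (m : ℕ) :
    jW p N x m = if hm : m < N then x ⟨m, hm⟩ else 0 := by
  rw [jW, Finsupp.finset_sum_apply]
  split_ifs with hm
  · rw [Finset.sum_eq_single (⟨m, hm⟩ : Fin N)]
    · rw [Finsupp.single_apply, if_pos rfl]
    · intro i _ hi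
      rw [Finsupp.single_apply, if_neg]
      intro hc
      exact hi (Fin.ext hc)
    · intro habs
      exact absurd (Finset.mem_univ _) habs
  · apply Finset.sum_eq_zero
    intro i _
    rw [Finsupp.single_apply, if_neg]
    intro hc
    have := i.2
    omega

def resW (p N : ℕ) (g : ℕ →₀ ZMod p) : Fin N → ZMod p := fun i => g (i : ℕ)

lemma resW_add (N : ℕ) (g h : ℕ →₀ ZMod p) :
    resW p N (g + h) = resW p N g + resW p N h := by
  funext i
  simp [resW]

lemma resW_zero (N : ℕ) : resW p N (0 : ℕ →₀ ZMod p) = 0 := by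
  funext i
  simp [resW]

lemma jW_resW (N : ℕ) (g : ℕ →₀ ZMod p) (h : ∀ m ∈ g.support, m < N) :
    jW p N (resW p N g) = g := by
  ext m
  rw [jW_apply]
  split_ifs with hm
  · rfl
  · symm
    rw [← Finsupp.notMem_support_iff]
    intro hc
    exact hm (h m hc)

lemma exists_good_class (k : ℕ) (hk : 0 < k) (cc : (ℕ →₀ ZMod p) → Fin k) :
    ∃ i₀ : Fin k, {N : ℕ | Fintype.card (Fin N → ZMod p)
      ≤ k * ((Finset.univ.filter fun x : Fin N → ZMod p => cc (jW p N x) = i₀).card)}.Infinite := by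
  have hbest : ∀ N : ℕ, ∃ i : Fin k, Fintype.card (Fin N → ZMod p)
      ≤ k * ((Finset.univ.filter fun x : Fin N → ZMod p => cc (jW p N x) = i).card) := by
    intro N
    haveI : Nonempty (Fin k) := ⟨⟨0, hk⟩⟩
    obtain ⟨i, -, hi⟩ := Finset.exists_max_image (Finset.univ : Finset (Fin k))
      (fun i => (Finset.univ.filter fun x : Fin N → ZMod p => cc (jW p N x) = i).card)
      ⟨⟨0, hk⟩, Finset.mem_univ _⟩
    refine ⟨i, ?_⟩
    have hsum := Finset.card_eq_sum_card_fiberwise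
      (f := fun x : Fin N → ZMod p => cc (jW p N x)) (s := Finset.univ) (t := Finset.univ)
      (fun x _ => Finset.mem_univ _)
    rw [Finset.card_univ] at hsum
    calc Fintype.card (Fin N → ZMod p)
        = ∑ b : Fin k, (Finset.univ.filter
            fun x : Fin N → ZMod p => cc (jW p N x) = b).card := hsum
      _ ≤ (Finset.univ : Finset (Fin k)).card • ((Finset.univ.filter
            fun x : Fin N → ZMod p => cc (jW p N x) = i).card) :=
          Finset.sum_le_card_nsmul _ _ _ (fun b _ => hi b (Finset.mem_univ _))
      _ = k * _ := by rw [Finset.card_univ, Fintype.card_fin, smul_eq_mul]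
  choose F hF using hbest
  have hex : ∃ i₀, {N : ℕ | F N = i₀}.Infinite := by
    by_contra hc
    push_neg at hc
    have huniv : (Set.univ : Set ℕ) = ⋃ i : Fin k, {N | F N = i} := by
      ext N
      simp [Set.mem_iUnion]
    exact Set.infinite_univ (by rw [huniv]; exact Set.finite_iUnion hc)
  obtain ⟨i₀, hi₀⟩ := hex
  refine ⟨i₀, hi₀.mono ?_⟩
  intro N hN
  rw [Set.mem_setOf] at hN ⊢
  rw [← hN]
  exact hF N

lemma ultra_exists {β γ : Type*} [Fintype γ] [Nonempty γ] (𝒰 : Ultrafilter β) (f : β → γ) :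
    ∃ a : γ, {x | f x = a} ∈ 𝒰 := by
  by_contra hc
  push_neg at hc
  have h2 : ∀ a : γ, {x | f x ≠ a} ∈ 𝒰 := by
    intro a
    have := (Ultrafilter.compl_mem_iff_notMem (s := {x | f x = a})).mpr (hc a)
    simpa [Set.compl_setOf] using this
  have h3 : (⋂ a : γ, {x : β | f x ≠ a}) ∈ (𝒰 : Filter β) := Filter.iInter_mem.mpr h2
  have h4 : (⋂ a : γ, {x : β | f x ≠ a}) = ∅ := by
    ext x
    simp only [Set.mem_iInter, Set.mem_setOf_eq, Set.mem_empty_iff_false, iff_false, not_forall,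
      not_not]
    exact ⟨f x, rfl⟩
  rw [h4] at h3
  exact (Filter.empty_notMem (𝒰 : Filter β)) h3

theorem class_psum (hp3 : 3 ≤ p) (k : ℕ) (hk : 0 < k) (cc : (ℕ →₀ ZMod p) → Fin k) :
    ∃ (i₀ : Fin k) (d : ℕ) (Φ : (ℕ →₀ ZMod p) →+ (Fin d → ZMod p)),
      ∀ g : ℕ →₀ ZMod p, Φ g = 0 →
        ∃ y : Fin p → (ℕ →₀ ZMod p), (∀ i, cc (y i) = i₀) ∧ ∑ i, y i = g := by
  obtain ⟨i₀, hI⟩ := exists_good_class k hk cc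
  set T₀ := 4*k^2 with hT₀
  set I := {N : ℕ | Fintype.card (Fin N → ZMod p)
    ≤ k * ((Finset.univ.filter fun x : Fin N → ZMod p => cc (jW p N x) = i₀).card)} with hIdef
  have hkR : (0:ℝ) < k := by exact_mod_cast hk
  have hφ : ∀ N : ↥I, ∃ φ : (Fin (N:ℕ) → ZMod p) →ₗ[ZMod p] (Fin T₀ → ZMod p),
      ∀ x, φ x = 0 → ∃ y : Fin p → (Fin (N:ℕ) → ZMod p),
        (∀ i, y i ∈ (Finset.univ.filter
          fun x : Fin (N:ℕ) → ZMod p => cc (jW p (N:ℕ) x) = i₀)) ∧ ∑ i, y i = x := by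
    intro N
    apply core hp3 ((k:ℝ)⁻¹) (by positivity)
      (by rw [inv_le_one_iff₀]; right; exact_mod_cast hk) T₀
    · have hN : Fintype.card (Fin (N:ℕ) → ZMod p) ≤ k * ((Finset.univ.filter
          fun x : Fin (N:ℕ) → ZMod p => cc (jW p (N:ℕ) x) = i₀).card) := N.2
      rw [inv_mul_le_iff₀ hkR]
      exact_mod_cast hN
    · have hz : (1:ℝ) - (T₀:ℝ) * (((k:ℝ)⁻¹)^2/4) = 0 := by
        rw [hT₀]
        push_cast
        field_simp
        ring
      rw [hz, zero_mul]
      positivity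
  choose φN hφN using hφ
  haveI : Infinite ↥I := hI.to_subtype
  set 𝒰 := Filter.hyperfilter ↥I with h𝒰
  have hval : ∀ g : ℕ →₀ ZMod p, ∃ v : Fin T₀ → ZMod p,
      {N : ↥I | φN N (resW p (N:ℕ) g) = v} ∈ 𝒰 := fun g => ultra_exists 𝒰 _
  choose V hV using hval
  have hzero : V 0 = 0 := by
    obtain ⟨N, hN⟩ := Ultrafilter.nonempty_of_mem (hV 0)
    rw [Set.mem_setOf] at hN
    rw [← hN, resW_zero, map_zero]
  have hadd : ∀ g h : ℕ →₀ ZMod p, V (g + h) = V g + V h := by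
    intro g h
    have hmem := Filter.inter_mem (Filter.inter_mem (hV g) (hV h)) (hV (g+h))
    obtain ⟨N, hN⟩ := Ultrafilter.nonempty_of_mem hmem
    obtain ⟨⟨h1, h2⟩, h3⟩ := hN
    rw [Set.mem_setOf] at h1 h2 h3
    rw [← h3, ← h1, ← h2, resW_add, map_add]
  refine ⟨i₀, T₀, AddMonoidHom.mk' V hadd, ?_⟩
  intro g hg
  have hg' : V g = 0 := hg
  have hsupp : {N : ↥I | ∀ m ∈ g.support, m < (N:ℕ)} ∈ 𝒰 := by
    rw [h𝒰]
    apply Filter.mem_hyperfilter_of_finite_compl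
    set B := g.support.sup id with hB
    have hsub : {N : ↥I | ∀ m ∈ g.support, m < (N:ℕ)}ᶜ ⊆ {N : ↥I | (N:ℕ) ≤ B} := by
      intro N hN
      simp only [Set.mem_compl_iff, Set.mem_setOf_eq, not_forall] at hN
      obtain ⟨m, hm, hmN⟩ := hN
      have hmB : m ≤ B := Finset.le_sup (f := id) hm
      simp only [Set.mem_setOf_eq]
      omega
    apply Set.Finite.subset _ hsub
    have : {N : ↥I | (N:ℕ) ≤ B} = Subtype.val ⁻¹' (Set.Iic B) := rfl
    rw [this]
    exact Set.Finite.preimage Subtype.val_injective.injOn (Set.finite_Iic B)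
  obtain ⟨N, hN⟩ := Ultrafilter.nonempty_of_mem (Filter.inter_mem (hV g) hsupp)
  obtain ⟨hN1, hN2⟩ := hN
  rw [Set.mem_setOf] at hN1 hN2
  obtain ⟨y', hy'mem, hy'sum⟩ := hφN N (resW p (N:ℕ) g) (by rw [hN1, hg'])
  refine ⟨fun i => jW p (N:ℕ) (y' i), fun i => ?_, ?_⟩
  · have hmm := hy'mem i
    rw [Finset.mem_filter] at hmm
    exact hmm.2
  · rw [← jW_sum, hy'sum, jW_resW _ _ hN2]

end Windows

section Bohr

variable {p : ℕ} [Fact p.Prime]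

noncomputable def psic (p : ℕ) : ZMod p →+ AddCircle (1:ℝ) :=
  ZMod.lift p ⟨(zmultiplesHom (AddCircle (1:ℝ))) (((p:ℝ)⁻¹ : ℝ) : AddCircle (1:ℝ)), by
    have hp : ((p:ℤ) • (((p:ℝ)⁻¹ : ℝ)) : ℝ) = if p = 0 then 0 else 1 := by
      split_ifs with h
      · simp [h]
      · rw [zsmul_eq_mul]
        push_cast
        field_simp
    rw [zmultiplesHom_apply, ← AddCircle.coe_zsmul, hp]
    split_ifs with h
    · exact (AddCircle.coe_eq_zero_iff _).mpr ⟨0, by simp⟩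
    · exact (AddCircle.coe_eq_zero_iff _).mpr ⟨1, by simp⟩⟩

lemma psic_apply (z : ZMod p) :
    psic p z = (((z.val : ℝ) * (p:ℝ)⁻¹ : ℝ) : AddCircle (1:ℝ)) := by
  have hz : ((z.val : ℤ) : ZMod p) = z := by
    push_cast
    exact ZMod.natCast_rightInverse z
  conv_lhs => rw [← hz]
  rw [psic, ZMod.lift_coe]
  rw [zmultiplesHom_apply, ← AddCircle.coe_zsmul]
  congr 1
  rw [zsmul_eq_mul]
  push_cast
  ring

lemma psic_small {z : ZMod p} (h : ‖psic p z‖ < (p:ℝ)⁻¹) : z = 0 := by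
  haveI : NeZero p := ⟨(Fact.out : p.Prime).pos.ne'⟩
  have hp0 : (0:ℝ) < p := by exact_mod_cast (Fact.out : p.Prime).pos
  rw [psic_apply, AddCircle.norm_eq] at h
  set v : ℝ := (z.val : ℝ) with hv
  set r : ℤ := round ((1:ℝ)⁻¹ * (v * (p:ℝ)⁻¹)) with hr
  have hint : |v * (p:ℝ)⁻¹ - r| < (p:ℝ)⁻¹ := by
    simpa using h
  have h2 : |v - r * p| < 1 := by
    rw [abs_lt] at hint ⊢
    obtain ⟨ha, hb⟩ := hint
    have e : (p:ℝ) * (v * (p:ℝ)⁻¹ - r) = v - r*p := by field_simp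
    have e2 : (p:ℝ) * (-(p:ℝ)⁻¹) = -1 := by field_simp
    have e3 : (p:ℝ) * ((p:ℝ)⁻¹) = 1 := by field_simp
    constructor
    · have h6 := mul_lt_mul_of_pos_left ha hp0
      rw [e, e2] at h6
      exact h6
    · have h6 := mul_lt_mul_of_pos_left hb hp0
      rw [e, e3] at h6
      exact h6
  have h3 : ((z.val : ℤ) - r * p : ℤ) = 0 := by
    have hcast : |(((z.val : ℤ) - r * p : ℤ) : ℝ)| < 1 := by
      push_cast
      exact h2
    have h5 : |((z.val : ℤ) - r * p : ℤ)| < 1 := by exact_mod_cast hcast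
    have h6 := abs_lt.mp h5
    omega
  have hvlt : z.val < p := ZMod.val_lt z
  have hr0 : r = 0 := by
    rcases lt_trichotomy r 0 with hrneg | hrz | hrpos
    · nlinarith [h3, hvlt]
    · exact hrz
    · nlinarith [h3, hvlt, (by exact_mod_cast Nat.zero_le z.val : (0:ℤ) ≤ (z.val:ℤ)),
        (by exact_mod_cast hvlt : ((z.val:ℤ)) < (p:ℤ))]
  rw [← ZMod.val_eq_zero]
  have : ((z.val : ℤ)) = 0 := by rw [hr0] at h3; omega
  exact_mod_cast this

end Bohr


section Assemble

variable {p : ℕ} [Fact p.Prime]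

lemma bohr_hits_kernel {S : Set (ℕ →₀ ZMod p)} (hS : BohrRecurrent S)
    {d : ℕ} (Φ : (ℕ →₀ ZMod p) →+ (Fin d → ZMod p)) : ∃ s ∈ S, Φ s = 0 := by
  have hp0 : (0:ℝ) < p := by exact_mod_cast (Fact.out : p.Prime).pos
  set ρ : (ℕ →₀ ZMod p) →+ (Fin d → AddCircle (1:ℝ)) :=
    { toFun := fun g i => psic p (Φ g i)
      map_zero' := by
        funext i
        simp only [map_zero, Pi.zero_apply, map_zero]
      map_add' := by
        intro g h
        funext i
        simp only [map_add, Pi.add_apply, map_add] } with hρ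
  obtain ⟨s, hsS, hsmall⟩ := hS d ρ ((p:ℝ)⁻¹) (by positivity)
  refine ⟨s, hsS, ?_⟩
  funext i
  have hsi := hsmall i
  have : ‖psic p (Φ s i)‖ < (p:ℝ)⁻¹ := hsi
  exact psic_small this

lemma exists_injective_choice : ∀ (m : ℕ) (Sets : Fin m → Set ℕ),
    (∀ j, (Sets j).Infinite) →
    ∃ n : Fin m → ℕ, Function.Injective n ∧ ∀ j, n j ∈ Sets j := by
  intro m
  induction m with
  | zero =>
    intro Sets _
    exact ⟨Fin.elim0, fun a => a.elim0, fun j => j.elim0⟩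
  | succ m ih =>
    intro Sets h
    obtain ⟨n, hinj, hmem⟩ := ih (fun j => Sets j.castSucc) (fun j => h j.castSucc)
    have hne : ((Sets (Fin.last m)) \ (Set.range n)).Nonempty :=
      Set.Infinite.nonempty ((h (Fin.last m)).diff (Set.finite_range n))
    obtain ⟨x, hx⟩ := hne
    refine ⟨Fin.snoc n x, ?_, ?_⟩
    · intro a b hab
      induction a using Fin.lastCases with
      | last =>
        induction b using Fin.lastCases with
        | last => rfl
        | cast b =>
          rw [Fin.snoc_last, Fin.snoc_castSucc] at hab
          exact absurd ⟨b, hab.symm⟩ hx.2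
      | cast a =>
        induction b using Fin.lastCases with
        | last =>
          rw [Fin.snoc_last, Fin.snoc_castSucc] at hab
          exact absurd ⟨a, hab⟩ hx.2
        | cast b =>
          rw [Fin.snoc_castSucc, Fin.snoc_castSucc] at hab
          rw [hinj hab]
    · intro j
      induction j using Fin.lastCases with
      | last => rw [Fin.snoc_last]; exact hx.1
      | cast j => rw [Fin.snoc_castSucc]; exact hmem j

lemma T_eFp (β : ℕ → (ℕ →₀ ZMod p)) (A : Finset ℕ) :
    Finsupp.linearCombination (ZMod p) β (eFp p A) = ∑ n ∈ A, β n := by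
  rw [eFp, map_sum]
  refine Finset.sum_congr rfl fun n _ => ?_
  rw [Finsupp.linearCombination_single, one_smul]

end Assemble
end S13

/-- Fix an odd prime `p`.  Suppose that for every collection `𝓕` of `p`-element subsets of
`ℕ` such that the hypergraph on `ℕ` with edge set `𝓕` has infinite chromatic number (every
finite coloring of `ℕ` has a monochromatic edge), the Cayley graph
`Cay(𝔽_p^ω, 𝓔(𝓕))` has infinite chromatic number.  Then every Bohr recurrent subset of
`𝔽_p^ω` is a set of chromatic recurrence. -/
theorem stmt_13 (p : ℕ) (hp : p.Prime) (hodd : Odd p)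
    (h : ∀ F : Set (Finset ℕ), (∀ A ∈ F, A.card = p) →
      (∀ (k : ℕ) (c : ℕ → Fin k), ∃ A ∈ F, ∃ i : Fin k, ∀ n ∈ A, c n = i) →
      ∀ n : ℕ, ¬ (cayleyGraph {x : ℕ →₀ ZMod p | ∃ A ∈ F, x = eFp p A}).Colorable n) :
    ∀ S : Set (ℕ →₀ ZMod p), BohrRecurrent S → ChromaticRecurrent S := by
  classical
  intro S hS r f
  haveI : Fact p.Prime := ⟨hp⟩
  have hp3 : 3 ≤ p := by
    obtain ⟨m, hm⟩ := hodd
    have := hp.two_le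
    omega
  by_contra hcon
  push_neg at hcon
  -- surjection with infinite fibers
  obtain ⟨σ, hσ⟩ := exists_surjective_nat (ℕ →₀ ZMod p)
  set β : ℕ → (ℕ →₀ ZMod p) := fun n => σ (Nat.unpair n).1 with hβ
  have hfib : ∀ g : ℕ →₀ ZMod p, {n | β n = g}.Infinite := by
    intro g
    obtain ⟨a, ha⟩ := hσ g
    apply Set.infinite_of_injective_forall_mem
      (f := fun b : ℕ => Nat.pair a b)
      (fun b b' hbb => (Nat.pair_eq_pair.mp hbb).2)
    intro b
    simp only [Set.mem_setOf_eq, hβ]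
    rw [Nat.unpair_pair]
    exact ha
  set F : Set (Finset ℕ) := {A | A.card = p ∧ (∑ n ∈ A, β n) ∈ S} with hF
  have hcards : ∀ A ∈ F, A.card = p := fun A hA => hA.1
  have hchrom : ∀ (k : ℕ) (c : ℕ → Fin k), ∃ A ∈ F, ∃ i : Fin k, ∀ n ∈ A, c n = i := by
    intro k c
    rcases Nat.eq_zero_or_pos k with rfl | hk
    · exact (c 0).elim0
    have hcc : ∀ g : ℕ →₀ ZMod p, ∃ i : Fin k, {n | β n = g ∧ c n = i}.Infinite := by
      intro g
      by_contra hcg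
      push_neg at hcg
      apply hfib g
      have hcov : {n | β n = g} = ⋃ i : Fin k, {n | β n = g ∧ c n = i} := by
        ext n
        simp only [Set.mem_setOf_eq, Set.mem_iUnion]
        exact ⟨fun hn => ⟨c n, hn, rfl⟩, fun ⟨i, hi, _⟩ => hi⟩
      rw [hcov]
      exact Set.finite_iUnion hcg
    choose cc hccInf using hcc
    obtain ⟨i₀, d, Φ, hΦ⟩ := S13.class_psum hp3 k hk cc
    obtain ⟨s, hsS, hs0⟩ := S13.bohr_hits_kernel hS Φ
    obtain ⟨y, hy, hysum⟩ := hΦ s hs0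
    have hsets : ∀ j : Fin p, {n | β n = y j ∧ c n = i₀}.Infinite := by
      intro j
      have hj := hccInf (y j)
      rw [hy j] at hj
      exact hj
    obtain ⟨nn, hninj, hnmem⟩ := S13.exists_injective_choice p _ hsets
    refine ⟨Finset.image nn Finset.univ, ⟨?_, ?_⟩, i₀, ?_⟩
    · rw [Finset.card_image_of_injective _ hninj, Finset.card_univ, Fintype.card_fin]
    · have hAsum : ∑ n ∈ Finset.image nn Finset.univ, β n = s := by
        rw [Finset.sum_image (fun a _ b _ hab => hninj hab)]
        rw [Finset.sum_congr rfl fun j _ => (hnmem j).1]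
        exact hysum
      rw [hAsum]
      exact hsS
    · intro n hn
      rw [Finset.mem_image] at hn
      obtain ⟨j, _, rfl⟩ := hn
      exact (hnmem j).2
  apply h F hcards hchrom r
  set T := Finsupp.linearCombination (ZMod p) β with hT
  refine ⟨SimpleGraph.Coloring.mk (fun g => f (T g)) ?_⟩
  intro g g' hadj
  rw [cayleyGraph, SimpleGraph.fromRel_adj] at hadj
  obtain ⟨hne, hcase⟩ := hadj
  intro hfeq
  rcases hcase with hmem | hmem
  · obtain ⟨A, hAF, hAe⟩ := hmem
    have hTs : T g - T g' = ∑ n ∈ A, β n := by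
      rw [← map_sub, hAe, S13.T_eFp]
    exact hcon (T g') (T g) hfeq.symm (by rw [hTs]; exact hAF.2)
  · obtain ⟨A, hAF, hAe⟩ := hmem
    have hTs : T g' - T g = ∑ n ∈ A, β n := by
      rw [← map_sub, hAe, S13.T_eFp]
    exact hcon (T g) (T g') hfeq (by rw [hTs]; exact hAF.2)
end

section
/- Let 𝒢 be the graph whose vertices are the 2-element subsets of ℤ × ℤ, with two distinct vertices {a, b} and {c, d} joined by an edge if and only if their symmetric difference equals the vertex set {(n, m), (n + e, m), (n, m + e), (n + e, m + e)} of some square with sides parallel to the coordinate axes (n, m ∈ ℤ, e ≥ 1). Then 𝒢 has chromatic number 2; in particular 𝒢 admits a proper coloring with 2 colors and has at least one edge. -/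
open Pointwise

/-- The vertex set `{(n,m), (n+e,m), (n,m+e), (n+e,m+e)}` of an axis-parallel square. -/
def squareVerts (n m e : ℤ) : Finset (ℤ × ℤ) :=
  {(n, m), (n + e, m), (n, m + e), (n + e, m + e)}

/-- The graph whose vertices are the 2-element subsets of `ℤ × ℤ`, two distinct vertices
being adjacent iff their symmetric difference is the vertex set of an axis-parallel
square. -/
def squaresGraph : SimpleGraph {s : Finset (ℤ × ℤ) // s.card = 2} :=
  SimpleGraph.fromRel fun v w =>
    ∃ n m e : ℤ, 1 ≤ e ∧ symmDiff v.1 w.1 = squareVerts n m e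

def pcol (p q : ℤ × ℤ) : Bool :=
  if p.2 = q.2 then decide ((p.2 / (q.1 - p.1)) % 2 = 1)
  else if p.1 = q.1 then decide ((p.1 / (q.2 - p.2)) % 2 = 1)
  else if q.1 - p.1 = q.2 - p.2 then false
  else if q.1 - p.1 = p.2 - q.2 then true
  else false

def scol (s : Finset (ℤ × ℤ)) : Bool :=
  match (s.image (toLex : ℤ × ℤ → ℤ ×ₗ ℤ)).min, (s.image (toLex : ℤ × ℤ → ℤ ×ₗ ℤ)).max with
  | some a, some b => pcol (ofLex a) (ofLex b)
  | _, _ => false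

lemma scol_pair (p q : ℤ × ℤ) (h : toLex p < toLex q) :
    scol {p, q} = pcol p q := by
  have himg : ({p, q} : Finset (ℤ × ℤ)).image toLex = {toLex p, toLex q} := by
    simp
  rw [scol, himg]
  rw [Finset.min_insert, Finset.max_insert, Finset.min_singleton, Finset.max_singleton]
  have h1 : min (↑(toLex p)) (↑(toLex q) : WithTop (ℤ ×ₗ ℤ)) = ↑(toLex p) :=
    min_eq_left (by exact_mod_cast h.le)
  have h2 : max (↑(toLex p)) (↑(toLex q) : WithBot (ℤ ×ₗ ℤ)) = ↑(toLex q) :=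
    max_eq_right (by exact_mod_cast h.le)
  rw [h1, h2]; rfl

lemma lexlt {p q : ℤ × ℤ} (h : p.1 < q.1 ∨ p.1 = q.1 ∧ p.2 < q.2) : toLex p < toLex q :=
  Prod.Lex.lt_iff.2 h

lemma colorHH {n m e : ℤ} (he : 1 ≤ e) :
    scol {(n, m), (n + e, m)} ≠ scol {(n, m + e), (n + e, m + e)} := by
  rw [scol_pair _ _ (lexlt (by left; omega)), scol_pair _ _ (lexlt (by left; omega))]
  unfold pcol
  have h2 : (m + e) / (n + e - n) = m / (n + e - n) + 1 := by
    have h3 : n + e - n = e := by ring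
    rw [h3]; simpa using Int.add_mul_ediv_right m 1 (by omega : e ≠ 0)
  split_ifs <;> try (exfalso; omega)
  rw [h2]
  generalize m / (n + e - n) = x
  simp only [ne_eq, decide_eq_decide]
  omega

lemma colorVV {n m e : ℤ} (he : 1 ≤ e) :
    scol {(n, m), (n, m + e)} ≠ scol {(n + e, m), (n + e, m + e)} := by
  rw [scol_pair _ _ (lexlt (by right; exact ⟨rfl, by omega⟩)),
      scol_pair _ _ (lexlt (by right; exact ⟨rfl, by omega⟩))]
  unfold pcol
  have h2 : (n + e) / (m + e - m) = n / (m + e - m) + 1 := by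
    have h3 : m + e - m = e := by ring
    rw [h3]; simpa using Int.add_mul_ediv_right n 1 (by omega : e ≠ 0)
  split_ifs <;> try (exfalso; omega)
  rw [h2]
  generalize n / (m + e - m) = x
  simp only [ne_eq, decide_eq_decide]
  omega

lemma colorDD {n m e : ℤ} (he : 1 ≤ e) :
    scol {(n, m), (n + e, m + e)} ≠ scol {(n, m + e), (n + e, m)} := by
  rw [scol_pair _ _ (lexlt (by left; omega)), scol_pair _ _ (lexlt (by left; omega))]
  unfold pcol
  split_ifs <;> first
    | (exfalso; omega)
    | simp

lemma key {n m e : ℤ} (he : 1 ≤ e) (v w : Finset (ℤ × ℤ)) (hv : v.card = 2) (hw : w.card = 2)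
    (hdisj : Disjoint v w) (hu : v ∪ w = squareVerts n m e) : scol v ≠ scol w := by
  obtain ⟨p, q, hpq, rfl⟩ := Finset.card_eq_two.mp hv
  have hwv : w = squareVerts n m e \ {p, q} := by
    rw [← hu, Finset.union_sdiff_cancel_left hdisj]
  have hp : p ∈ squareVerts n m e := by
    rw [← hu]; exact Finset.mem_union_left _ (by simp)
  have hq : q ∈ squareVerts n m e := by
    rw [← hu]; exact Finset.mem_union_left _ (by simp)
  simp only [squareVerts, Finset.mem_insert, Finset.mem_singleton] at hp hq
  have setsolve : ∀ s t : Finset (ℤ × ℤ), (∀ x : ℤ × ℤ, x ∈ s ↔ x ∈ t) → s = t :=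
    fun s t h => Finset.ext h
  rcases hp with rfl | rfl | rfl | rfl <;> rcases hq with rfl | rfl | rfl | rfl <;>
      try (exact absurd rfl hpq)
  -- (A,B)
  · rw [hwv, show squareVerts n m e \ {(n, m), (n + e, m)} = {(n, m + e), (n + e, m + e)} from
      Finset.ext (fun x => by simp [squareVerts, Prod.ext_iff]; omega)]
    exact colorHH he
  -- (A,C)
  · rw [hwv, show squareVerts n m e \ {(n, m), (n, m + e)} = {(n + e, m), (n + e, m + e)} from
      Finset.ext (fun x => by simp [squareVerts, Prod.ext_iff]; omega)]
    exact colorVV he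
  -- (A,D)
  · rw [hwv, show squareVerts n m e \ {(n, m), (n + e, m + e)} = {(n, m + e), (n + e, m)} from
      Finset.ext (fun x => by simp [squareVerts, Prod.ext_iff]; omega)]
    exact colorDD he
  -- (B,A)
  · rw [hwv, show squareVerts n m e \ {(n + e, m), (n, m)} = {(n, m + e), (n + e, m + e)} from
      Finset.ext (fun x => by simp [squareVerts, Prod.ext_iff]; omega),
      Finset.pair_comm (n + e, m) (n, m)]
    exact colorHH he
  -- (B,C)
  · rw [hwv, show squareVerts n m e \ {(n + e, m), (n, m + e)} = {(n, m), (n + e, m + e)} from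
      Finset.ext (fun x => by simp [squareVerts, Prod.ext_iff]; omega),
      Finset.pair_comm (n + e, m) (n, m + e)]
    exact (colorDD he).symm
  -- (B,D)
  · rw [hwv, show squareVerts n m e \ {(n + e, m), (n + e, m + e)} = {(n, m), (n, m + e)} from
      Finset.ext (fun x => by simp [squareVerts, Prod.ext_iff]; omega)]
    exact (colorVV he).symm
  -- (C,A)
  · rw [hwv, show squareVerts n m e \ {(n, m + e), (n, m)} = {(n + e, m), (n + e, m + e)} from
      Finset.ext (fun x => by simp [squareVerts, Prod.ext_iff]; omega),
      Finset.pair_comm (n, m + e) (n, m)]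
    exact colorVV he
  -- (C,B)
  · rw [hwv, show squareVerts n m e \ {(n, m + e), (n + e, m)} = {(n, m), (n + e, m + e)} from
      Finset.ext (fun x => by simp [squareVerts, Prod.ext_iff]; omega)]
    exact (colorDD he).symm
  -- (C,D)
  · rw [hwv, show squareVerts n m e \ {(n, m + e), (n + e, m + e)} = {(n, m), (n + e, m)} from
      Finset.ext (fun x => by simp [squareVerts, Prod.ext_iff]; omega)]
    exact (colorHH he).symm
  -- (D,A)
  · rw [hwv, show squareVerts n m e \ {(n + e, m + e), (n, m)} = {(n, m + e), (n + e, m)} from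
      Finset.ext (fun x => by simp [squareVerts, Prod.ext_iff]; omega),
      Finset.pair_comm (n + e, m + e) (n, m)]
    exact colorDD he
  -- (D,B)
  · rw [hwv, show squareVerts n m e \ {(n + e, m + e), (n + e, m)} = {(n, m), (n, m + e)} from
      Finset.ext (fun x => by simp [squareVerts, Prod.ext_iff]; omega),
      Finset.pair_comm (n + e, m + e) (n + e, m)]
    exact (colorVV he).symm
  -- (D,C)
  · rw [hwv, show squareVerts n m e \ {(n + e, m + e), (n, m + e)} = {(n, m), (n + e, m)} from
      Finset.ext (fun x => by simp [squareVerts, Prod.ext_iff]; omega),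
      Finset.pair_comm (n + e, m + e) (n, m + e)]
    exact (colorHH he).symm

/-- The graph `𝒢` above has chromatic number `2`. -/
theorem stmt_15 : squaresGraph.chromaticNumber = 2 := by
  classical
  have valid : ∀ {v w : {s : Finset (ℤ × ℤ) // s.card = 2}}, squaresGraph.Adj v w →
      scol v.1 ≠ scol w.1 := by
    intro v w hadj
    rw [squaresGraph, SimpleGraph.fromRel_adj] at hadj
    obtain ⟨hne, h⟩ := hadj
    have hsd : ∃ n m e : ℤ, 1 ≤ e ∧ symmDiff v.1 w.1 = squareVerts n m e := by
      rcases h with h | h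
      · exact h
      · obtain ⟨n, m, e, he, hs⟩ := h; exact ⟨n, m, e, he, by rwa [symmDiff_comm]⟩
    obtain ⟨n, m, e, he, hs⟩ := hsd
    have hcard4 : (squareVerts n m e).card = 4 := by
      rw [squareVerts]
      rw [Finset.card_insert_of_notMem (by simp [Prod.ext_iff]; omega),
          Finset.card_insert_of_notMem (by simp [Prod.ext_iff]; omega),
          Finset.card_insert_of_notMem (by simp [Prod.ext_iff]; omega),
          Finset.card_singleton]
    have hsub : symmDiff v.1 w.1 ⊆ v.1 ∪ w.1 := by
      have h0 : symmDiff v.1 w.1 ≤ v.1 ⊔ w.1 := symmDiff_le_sup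
      rw [Finset.sup_eq_union] at h0
      exact h0
    have h1 : (v.1 ∪ w.1).card ≤ 4 := by
      have := Finset.card_union_le v.1 w.1
      rw [v.2, w.2] at this; omega
    have h2 : 4 ≤ (v.1 ∪ w.1).card := by
      rw [← hcard4, ← hs]; exact Finset.card_le_card hsub
    have hunion : v.1 ∪ w.1 = squareVerts n m e := by
      rw [← hs]
      exact (Finset.eq_of_subset_of_card_le hsub (by rw [hs, hcard4]; omega)).symm
    have hdisj : Disjoint v.1 w.1 := by
      rw [Finset.disjoint_iff_inter_eq_empty, ← Finset.card_eq_zero]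
      have h3 := Finset.card_union_add_card_inter v.1 w.1
      rw [v.2, w.2] at h3; omega
    exact key he v.1 w.1 v.2 w.2 hdisj hunion
  let C : squaresGraph.Coloring Bool := SimpleGraph.Coloring.mk (fun v => scol v.1) valid
  have hcol : squaresGraph.Colorable 2 := by simpa using C.colorable
  have hedge : squaresGraph.Adj ⟨{(0, 0), (1, 0)}, by decide⟩ ⟨{(0, 1), (1, 1)}, by decide⟩ := by
    rw [squaresGraph, SimpleGraph.fromRel_adj]
    refine ⟨?_, Or.inl ⟨0, 0, 1, le_refl 1, by decide⟩⟩
    intro hcon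
    have : ({(0, 0), (1, 0)} : Finset (ℤ × ℤ)) = {(0, 1), (1, 1)} := congrArg Subtype.val hcon
    exact absurd this (by decide)
  refine le_antisymm ?_ ?_
  · exact_mod_cast hcol.chromaticNumber_le
  · rw [show (2 : ℕ∞) = ((2 : ℕ) : ℕ∞) from rfl,
      SimpleGraph.le_chromaticNumber_iff_forall_surjective]
    intro D b
    set v := (⟨{((0:ℤ), (0:ℤ)), (1, 0)}, by decide⟩ : {s : Finset (ℤ × ℤ) // s.card = 2})
    set w := (⟨{((0:ℤ), (1:ℤ)), (1, 1)}, by decide⟩ : {s : Finset (ℤ × ℤ) // s.card = 2})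
    have hne : D v ≠ D w := D.valid hedge
    by_cases hb : b = D v
    · exact ⟨v, hb.symm⟩
    · refine ⟨w, ?_⟩
      have h1 : b.1 ≠ (D v).1 := fun hc => hb (Fin.ext hc)
      have h2 : (D v).1 ≠ (D w).1 := fun hc => hne (Fin.ext hc)
      have : (D w).1 = b.1 := by omega
      exact Fin.ext this
end

section
/- Let G be the group of finitely supported functions ℤ × ℤ → ℤ/2ℤ under pointwise addition, and for a finite set F ⊆ ℤ × ℤ let e_F ∈ G denote the indicator function of F. Let S_□ := {e_F : F = {(n, m), (n + d, m), (n, m + d), (n + d, m + d)} for some n, m ∈ ℤ and d ≥ 1}. Then S_□ is a set of Bohr recurrence in G. -/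
open Pointwise

/-- `e_F ∈ ⨁_{ℤ × ℤ} ℤ/2ℤ`: the indicator function of the finite set `F ⊆ ℤ × ℤ`. -/
noncomputable def eF2 (F : Finset (ℤ × ℤ)) : (ℤ × ℤ) →₀ ZMod 2 :=
  ∑ x ∈ F, Finsupp.single x (1 : ZMod 2)

lemma aux_half {y : AddCircle (1:ℝ)} (h : y + y = 0) (h0 : y ≠ 0) :
    y = ((1/2 : ℝ) : AddCircle (1:ℝ)) := by
  induction y using QuotientAddGroup.induction_on with
  | H r =>
    rw [← AddCircle.coe_add, AddCircle.coe_eq_zero_iff] at h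
    obtain ⟨n, hn⟩ := h
    rw [zsmul_eq_mul, mul_one] at hn
    rcases Int.even_or_odd n with ⟨k, hk⟩ | ⟨k, hk⟩
    · exfalso
      apply h0
      rw [AddCircle.coe_eq_zero_iff]
      refine ⟨k, ?_⟩
      rw [zsmul_eq_mul, mul_one]
      have : (n : ℝ) = k + k := by exact_mod_cast hk
      linarith
    · rw [← sub_eq_zero, ← AddCircle.coe_sub, AddCircle.coe_eq_zero_iff]
      refine ⟨k, ?_⟩
      rw [zsmul_eq_mul, mul_one]
      have : (n : ℝ) = 2 * k + 1 := by exact_mod_cast hk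
      linarith

/-- The set `S_□` of indicator functions of vertex sets of axis-parallel squares is a set
of Bohr recurrence in the group of finitely supported functions `ℤ × ℤ → ℤ/2ℤ`. -/
theorem stmt_16 :
    BohrRecurrent {s : (ℤ × ℤ) →₀ ZMod 2 |
      ∃ n m d : ℤ, 1 ≤ d ∧ s = eF2 (squareVerts n m d)} := by
  classical
  intro d ρ ε hε
  set c : ℤ × ℤ → Fin d → AddCircle (1:ℝ) := fun x => ρ (Finsupp.single x 1) with hc
  have htor : ∀ x : ℤ × ℤ, c x + c x = 0 := by
    intro x
    show ρ (Finsupp.single x 1) + ρ (Finsupp.single x 1) = 0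
    rw [← map_add, ← Finsupp.single_add,
      show (1 : ZMod 2) + 1 = 0 from by decide, Finsupp.single_zero, map_zero]
  set C : ℤ × ℤ → (Fin d → Prop) := fun x i => c x i = 0 with hC
  obtain ⟨a, ha, b, col, hmono⟩ :=
    Combinatorics.exists_mono_homothetic_copy
      ({(0,0),(1,0),(0,1),(1,1)} : Finset (ℤ×ℤ)) C
  obtain ⟨n, m⟩ := b
  set e : ℤ := (a : ℤ) with he
  have he1 : 1 ≤ e := by rw [he]; exact_mod_cast ha
  have k1 : a • ((0,0) : ℤ×ℤ) + (n, m) = ((n, m) : ℤ×ℤ) := by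
    simp
  have k2 : a • ((1,0) : ℤ×ℤ) + (n, m) = ((n + e, m) : ℤ×ℤ) := by
    simp [Prod.ext_iff, he, nsmul_eq_mul]; ring
  have k3 : a • ((0,1) : ℤ×ℤ) + (n, m) = ((n, m + e) : ℤ×ℤ) := by
    simp [Prod.ext_iff, he, nsmul_eq_mul]; ring
  have k4 : a • ((1,1) : ℤ×ℤ) + (n, m) = ((n + e, m + e) : ℤ×ℤ) := by
    simp [Prod.ext_iff, he, nsmul_eq_mul]; constructor <;> ring
  have e1 : C (n, m) = col := by
    have := hmono (0,0) (by simp); rwa [k1] at this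
  have e2 : C (n + e, m) = col := by
    have := hmono (1,0) (by simp); rwa [k2] at this
  have e3 : C (n, m + e) = col := by
    have := hmono (0,1) (by simp); rwa [k3] at this
  have e4 : C (n + e, m + e) = col := by
    have := hmono (1,1) (by simp); rwa [k4] at this
  refine ⟨eF2 (squareVerts n m e), ⟨n, m, e, he1, rfl⟩, ?_⟩
  have h1 : ((n,m) : ℤ×ℤ) ∉ ({(n+e,m),(n,m+e),(n+e,m+e)} : Finset (ℤ×ℤ)) := by
    simp [Prod.ext_iff]; omega
  have h2 : ((n+e,m) : ℤ×ℤ) ∉ ({(n,m+e),(n+e,m+e)} : Finset (ℤ×ℤ)) := by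
    simp [Prod.ext_iff]; omega
  have h3 : ((n,m+e) : ℤ×ℤ) ∉ ({(n+e,m+e)} : Finset (ℤ×ℤ)) := by
    simp [Prod.ext_iff]; omega
  have hsum : ρ (eF2 (squareVerts n m e))
      = c (n,m) + (c (n+e,m) + (c (n,m+e) + c (n+e,m+e))) := by
    rw [eF2, squareVerts, Finset.sum_insert h1, Finset.sum_insert h2, Finset.sum_insert h3,
      Finset.sum_singleton, map_add, map_add, map_add]
  intro i
  have key : ∀ p : ℤ × ℤ, C p = col →
      (col i → c p i = 0) ∧ (¬ col i → c p i = ((1/2 : ℝ) : AddCircle (1:ℝ))) := by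
    intro p hp
    have hpi : (c p i = 0) = col i := congrFun hp i
    constructor
    · intro h; exact Eq.mpr hpi h
    · intro h
      refine aux_half ?_ (fun h0 => h (Eq.mp hpi h0))
      exact congrFun (htor p) i
  have hzero : ρ (eF2 (squareVerts n m e)) i = 0 := by
    rw [hsum]
    show c (n,m) i + (c (n+e,m) i + (c (n,m+e) i + c (n+e,m+e) i)) = 0
    by_cases hcase : col i
    · rw [(key _ e1).1 hcase, (key _ e2).1 hcase, (key _ e3).1 hcase, (key _ e4).1 hcase]
      simp
    · have hh : ((1/2:ℝ) : AddCircle (1:ℝ)) + ((1/2:ℝ) : AddCircle (1:ℝ)) = 0 := by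
        rw [← AddCircle.coe_add, show (1/2 + 1/2 : ℝ) = 1 by norm_num]
        exact AddCircle.coe_period 1
      rw [(key _ e1).2 hcase, (key _ e2).2 hcase, (key _ e3).2 hcase, (key _ e4).2 hcase,
        hh, add_zero, hh]
  rw [hzero, norm_zero]
  exact hε
end

section
/- Let G be an abelian group and let E ⊆ G. Suppose that every bounded function f : E → ℂ can be uniformly approximated on E by restrictions of trigonometric polynomials; that is, for every ε > 0 there is a trigonometric polynomial p on G with |f(x) − p(x)| ≤ ε for all x ∈ E. Then E is an I₀ set. -/
open Pointwise

section lemmas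
variable {G : Type*} [AddCommGroup G]

lemma isChar_one : IsChar (fun _ : G => (1:ℂ)) :=
  ⟨fun _ => by simp, fun _ _ => by simp⟩

lemma isChar_mul {χ η : G → ℂ} (hχ : IsChar χ) (hη : IsChar η) :
    IsChar (fun g => χ g * η g) :=
  ⟨fun g => by simp [map_mul, hχ.1 g, hη.1 g],
   fun a b => by show χ (a+b) * η (a+b) = _; rw [hχ.2 a b, hη.2 a b]; ring⟩

lemma isChar_conj {χ : G → ℂ} (hχ : IsChar χ) :
    IsChar (fun g => (starRingEnd ℂ) (χ g)) :=
  ⟨fun g => by simp [hχ.1 g],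
   fun a b => by show (starRingEnd ℂ) (χ (a+b)) = _; rw [hχ.2 a b, map_mul]⟩

lemma isTrigPoly_iff_mem_span {p : G → ℂ} :
    IsTrigPoly p ↔ p ∈ Submodule.span ℂ {χ : G → ℂ | IsChar χ} := by
  constructor
  · rintro ⟨n, c, χ, hχ, hp⟩
    have : p = ∑ i, c i • χ i := by
      funext g
      rw [hp g]
      simp [Finset.sum_apply, smul_eq_mul]
    rw [this]
    exact Submodule.sum_mem _ fun i _ =>
      Submodule.smul_mem _ _ (Submodule.subset_span (hχ i))
  · intro hp
    rw [Submodule.mem_span_set'] at hp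
    obtain ⟨n, c, χ, hp⟩ := hp
    exact ⟨n, c, fun i => (χ i : G → ℂ), fun i => (χ i).2, fun g => by
      rw [← hp]; simp [Finset.sum_apply, smul_eq_mul]⟩

lemma IsTrigPoly.add {p q : G → ℂ} (hp : IsTrigPoly p) (hq : IsTrigPoly q) :
    IsTrigPoly (p + q) := by
  rw [isTrigPoly_iff_mem_span] at *
  exact Submodule.add_mem _ hp hq

lemma IsTrigPoly.const (c : ℂ) : IsTrigPoly (fun _ : G => c) := by
  refine ⟨1, fun _ => c, fun _ => fun _ => 1, fun _ => isChar_one, fun g => by simp⟩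

lemma IsTrigPoly.zero : IsTrigPoly (fun _ : G => (0:ℂ)) := IsTrigPoly.const 0

lemma IsTrigPoly.mul {p q : G → ℂ} (hp : IsTrigPoly p) (hq : IsTrigPoly q) :
    IsTrigPoly (p * q) := by
  rw [isTrigPoly_iff_mem_span] at *
  have h1 : p * q ∈ Submodule.span ℂ {χ : G → ℂ | IsChar χ} *
      Submodule.span ℂ {χ : G → ℂ | IsChar χ} := Submodule.mul_mem_mul hp hq
  rw [Submodule.span_mul_span] at h1
  refine Submodule.span_le.2 ?_ h1
  rintro x ⟨a, ha, b, hb, rfl⟩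
  exact Submodule.subset_span (isChar_mul ha hb)

lemma IsTrigPoly.conj {p : G → ℂ} (hp : IsTrigPoly p) :
    IsTrigPoly (fun g => (starRingEnd ℂ) (p g)) := by
  obtain ⟨n, c, χ, hχ, hpg⟩ := hp
  exact ⟨n, fun i => (starRingEnd ℂ) (c i), fun i g => (starRingEnd ℂ) (χ i g),
    fun i => isChar_conj (hχ i), fun g => by
      show (starRingEnd ℂ) (p g) = _
      rw [hpg g, map_sum]
      simp⟩

lemma IsTrigPoly.polyEval {p : G → ℂ} (hp : IsTrigPoly p) (P : Polynomial ℂ) :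
    IsTrigPoly (fun g => P.eval (p g)) := by
  induction P using Polynomial.induction_on with
  | C a => simpa using IsTrigPoly.const a
  | add P Q hP hQ =>
      have h2 : (fun g => Polynomial.eval (p g) (P + Q)) =
          (fun g => Polynomial.eval (p g) P) + (fun g => Polynomial.eval (p g) Q) :=
        funext fun g => by simp
      rw [h2]; exact hP.add hQ
  | monomial n a hn =>
      have h2 : (fun g => Polynomial.eval (p g) (Polynomial.C a * Polynomial.X ^ (n + 1))) =
          (fun g => Polynomial.eval (p g) (Polynomial.C a * Polynomial.X ^ n)) * p :=
        funext fun g => by simp [pow_succ]; ring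
      rw [h2]; exact hn.mul hp

lemma IsTrigPoly.bound {p : G → ℂ} (hp : IsTrigPoly p) :
    ∃ M : ℝ, 0 ≤ M ∧ ∀ g, ‖p g‖ ≤ M := by
  obtain ⟨n, c, χ, hχ, hpg⟩ := hp
  refine ⟨∑ i, ‖c i‖, Finset.sum_nonneg fun i _ => (norm_nonneg _), fun g => ?_⟩
  rw [hpg g]
  refine le_trans (norm_sum_le _ _) (le_of_eq ?_)
  refine Finset.sum_congr rfl fun i _ => ?_
  rw [norm_mul, (hχ i).1 g, mul_one]

end lemmas

section ap
variable {G : Type*} [AddCommGroup G]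

lemma IsTrigPoly.isAlmostPeriodic {p : G → ℂ} (hp : IsTrigPoly p) :
    IsAlmostPeriodic p :=
  fun ε hε => ⟨p, hp, fun g => by simpa using hε.le⟩

lemma IsAlmostPeriodic.add {ψ φ : G → ℂ} (hψ : IsAlmostPeriodic ψ)
    (hφ : IsAlmostPeriodic φ) : IsAlmostPeriodic (ψ + φ) := by
  intro ε hε
  obtain ⟨p, hp, hpe⟩ := hψ (ε/2) (by linarith)
  obtain ⟨q, hq, hqe⟩ := hφ (ε/2) (by linarith)
  refine ⟨p + q, hp.add hq, fun g => ?_⟩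
  have : (ψ + φ) g - (p + q) g = (ψ g - p g) + (φ g - q g) := by
    simp [Pi.add_apply]; ring
  rw [this]
  calc ‖_‖ ≤ ‖ψ g - p g‖ + ‖φ g - q g‖ :=
        norm_add_le _ _
    _ ≤ ε/2 + ε/2 := add_le_add (hpe g) (hqe g)
    _ = ε := by ring

lemma isAlmostPeriodic_of_approx {ψ : G → ℂ}
    (h : ∀ ε : ℝ, 0 < ε → ∃ φ : G → ℂ, IsAlmostPeriodic φ ∧
      ∀ g, ‖ψ g - φ g‖ ≤ ε) : IsAlmostPeriodic ψ := by
  intro ε hε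
  obtain ⟨φ, hφ, hφe⟩ := h (ε/2) (by linarith)
  obtain ⟨p, hp, hpe⟩ := hφ (ε/2) (by linarith)
  refine ⟨p, hp, fun g => ?_⟩
  have : ψ g - p g = (ψ g - φ g) + (φ g - p g) := by ring
  rw [this]
  calc ‖_‖ ≤ ‖ψ g - φ g‖ + ‖φ g - p g‖ :=
        norm_add_le _ _
    _ ≤ ε/2 + ε/2 := add_le_add (hφe g) (hpe g)
    _ = ε := by ring

/-- Truncation of a trigonometric polynomial to the disk of radius `r` is
almost periodic. -/
lemma exists_truncation {p : G → ℂ} (hp : IsTrigPoly p) {r : ℝ} (hr : 0 < r) :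
    ∃ q : G → ℂ, IsAlmostPeriodic q ∧ (∀ g, ‖q g‖ ≤ r) ∧
      ∀ g, ‖p g‖ ≤ r → q g = p g := by
  obtain ⟨M, hM0, hM⟩ := hp.bound
  set φ : ℝ → ℝ := fun t => r / max r (Real.sqrt t) with hφdef
  set q : G → ℂ := fun g => (φ (‖p g‖ ^ 2) : ℝ) * p g with hqdef
  have hφval : ∀ g, φ (‖p g‖ ^ 2) = r / max r (‖p g‖) := by
    intro g
    simp [hφdef, Real.sqrt_sq (norm_nonneg (p g))]
  have habs : ∀ g, ‖q g‖ ≤ r := by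
    intro g
    have hmaxpos : 0 < max r (‖p g‖) := lt_of_lt_of_le hr (le_max_left _ _)
    have h1 : ‖q g‖ =
        (r / max r (‖p g‖)) * ‖p g‖ := by
      rw [hqdef]
      simp only [norm_mul, Complex.norm_real, Real.norm_eq_abs, hφval g]
      rw [abs_of_nonneg (div_nonneg hr.le hmaxpos.le)]
    rw [h1]
    calc (r / max r (‖p g‖)) * ‖p g‖
        ≤ (r / max r (‖p g‖)) * max r (‖p g‖) :=
          mul_le_mul_of_nonneg_left (le_max_right _ _) (div_nonneg hr.le hmaxpos.le)
      _ = r := div_mul_cancel₀ _ hmaxpos.ne'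
  have heq : ∀ g, ‖p g‖ ≤ r → q g = p g := by
    intro g hg
    rw [hqdef]
    simp only [hφval g, max_eq_left hg, div_self hr.ne', Complex.ofReal_one, one_mul]
  refine ⟨q, ?_, habs, heq⟩
  -- almost periodicity
  intro ε hε
  set M' : ℝ := max M r with hM'def
  have hM'pos : 0 < M' := lt_of_lt_of_le hr (le_max_right _ _)
  have hεpos : 0 < ε / (M' + 1) := div_pos hε (by linarith)
  have hcont : ContinuousOn φ (Set.Icc 0 (M' ^ 2)) := by
    apply Continuous.continuousOn
    apply continuous_const.div (continuous_const.max Real.continuous_sqrt)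
    intro t
    exact ne_of_gt (lt_of_lt_of_le hr (le_max_left _ _))
  obtain ⟨Q, hQ⟩ := exists_polynomial_near_of_continuousOn 0 (M' ^ 2) φ hcont
    (ε / (M' + 1)) hεpos
  set P : Polynomial ℂ := Q.map (algebraMap ℝ ℂ) with hPdef
  set t : G → ℂ := fun g =>
    Polynomial.eval ((starRingEnd ℂ) (p g) * p g) P * p g with htdef
  have ht : IsTrigPoly t := by
    have h1 : IsTrigPoly ((fun g => (starRingEnd ℂ) (p g)) * p) := hp.conj.mul hp
    have h2 := (h1.polyEval P).mul hp
    convert h2 using 1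
    rfl
  have hkey : ∀ g, Polynomial.eval ((starRingEnd ℂ) (p g) * p g) P =
      ((Q.eval (‖p g‖ ^ 2) : ℝ) : ℂ) := by
    intro g
    have h3 : (starRingEnd ℂ) (p g) * p g = ((‖p g‖ ^ 2 : ℝ) : ℂ) := by
      rw [mul_comm, Complex.mul_conj]
      norm_cast
      rw [Complex.sq_norm]
    rw [h3, hPdef, Polynomial.eval_map]
    exact Polynomial.eval₂_hom (algebraMap ℝ ℂ) _
  refine ⟨t, ht, fun g => ?_⟩
  have hmem : ‖p g‖ ^ 2 ∈ Set.Icc (0:ℝ) (M' ^ 2) := by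
    constructor
    · positivity
    · have : ‖p g‖ ≤ M' := le_trans (hM g) (le_max_left _ _)
      nlinarith [norm_nonneg (p g)]
  have hdiff : q g - t g =
      ((φ (‖p g‖ ^ 2) - Q.eval (‖p g‖ ^ 2) : ℝ) : ℂ) * p g := by
    simp only [hqdef, htdef, hkey g]
    push_cast
    ring
  rw [hdiff, norm_mul, Complex.norm_real, Real.norm_eq_abs]
  have h4 : |φ (‖p g‖ ^ 2) - Q.eval (‖p g‖ ^ 2)| ≤ ε / (M' + 1) := by
    rw [abs_sub_comm]
    exact (hQ _ hmem).le
  have h5 : ‖p g‖ ≤ M' := le_trans (hM g) (le_max_left _ _)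
  calc |φ _ - Q.eval _| * ‖p g‖ ≤ (ε / (M' + 1)) * (M' + 1) :=
        mul_le_mul h4 (by linarith) (norm_nonneg _) hεpos.le
    _ = ε := div_mul_cancel₀ _ (by linarith)

end ap

section main
variable {G : Type*} [AddCommGroup G]

lemma stepLemma {E : Set G}
    (h : ∀ f : G → ℂ, (∃ C : ℝ, ∀ x ∈ E, ‖f x‖ ≤ C) →
      ∀ ε : ℝ, 0 < ε → ∃ p : G → ℂ, IsTrigPoly p ∧ ∀ x ∈ E, ‖f x - p x‖ ≤ ε)
    (F : G → ℂ) (δ : ℝ) (hδ : 0 < δ) (hF : ∀ x ∈ E, ‖F x‖ ≤ δ) :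
    ∃ q : G → ℂ, IsAlmostPeriodic q ∧ (∀ g, ‖q g‖ ≤ 2*δ) ∧
      ∀ x ∈ E, ‖F x - q x‖ ≤ δ/2 := by
  obtain ⟨p, hp, hpe⟩ := h F ⟨δ, hF⟩ (δ/2) (by linarith)
  have hpE : ∀ x ∈ E, ‖p x‖ ≤ 3*δ/2 := by
    intro x hx
    have h1 : p x = F x - (F x - p x) := by ring
    rw [h1]
    rw [sub_eq_add_neg]
    calc ‖F x + -(F x - p x)‖
        ≤ ‖F x‖ + ‖-(F x - p x)‖ := norm_add_le _ _
      _ = ‖F x‖ + ‖F x - p x‖ := by rw [norm_neg]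
      _ ≤ δ + δ/2 := add_le_add (hF x hx) (hpe x hx)
      _ = 3*δ/2 := by ring
  obtain ⟨q, hq, hqb, hqe⟩ := exists_truncation hp (show (0:ℝ) < 3*δ/2 by linarith)
  refine ⟨q, hq, fun g => le_trans (hqb g) (by linarith), fun x hx => ?_⟩
  rw [hqe x (hpE x hx)]
  exact hpe x hx

theorem main_thm (E : Set G)
    (h : ∀ f : G → ℂ, (∃ C : ℝ, ∀ x ∈ E, ‖f x‖ ≤ C) →
      ∀ ε : ℝ, 0 < ε → ∃ p : G → ℂ, IsTrigPoly p ∧ ∀ x ∈ E, ‖f x - p x‖ ≤ ε) :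
    ∀ f : G → ℂ, (∃ C : ℝ, ∀ x ∈ E, ‖f x‖ ≤ C) →
    ∃ ψ : G → ℂ, IsAlmostPeriodic ψ ∧ ∀ x ∈ E, ψ x = f x := by
  classical
  rintro f ⟨C, hC⟩
  set C' : ℝ := max C 0 + 1 with hC'def
  have hC'pos : 0 < C' := by positivity
  set δ : ℕ → ℝ := fun n => C' * (1/2)^n with hδdef
  have hδpos : ∀ n, 0 < δ n := fun n => by positivity
  have hδhalf : ∀ n, δ (n+1) = δ n / 2 := fun n => by
    simp only [hδdef, pow_succ]; ring
  set step : (G → ℂ) → ℕ → (G → ℂ) := fun F n =>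
    if h' : ∀ x ∈ E, ‖F x‖ ≤ δ n then
      (stepLemma h F (δ n) (hδpos n) h').choose else 0 with hstepdef
  set gseq : ℕ → G → ℂ := fun n =>
    Nat.rec (motive := fun _ => G → ℂ) f (fun n gn => gn - step gn n) n with hgdef
  have hgsucc : ∀ n, gseq (n+1) = gseq n - step (gseq n) n := fun n => rfl
  have inv : ∀ n, ∀ x ∈ E, ‖gseq n x‖ ≤ δ n := by
    intro n
    induction n with
    | zero =>
        intro x hx
        have : ‖f x‖ ≤ C' := le_trans (hC x hx)
          (le_trans (le_max_left C 0) (by linarith))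
        show ‖f x‖ ≤ δ 0
        simpa [hδdef] using this
    | succ n ih =>
        intro x hx
        have hse : step (gseq n) n = (stepLemma h (gseq n) (δ n) (hδpos n) ih).choose :=
          dif_pos ih
        have hspec := (stepLemma h (gseq n) (δ n) (hδpos n) ih).choose_spec
        rw [hgsucc n]
        have : (gseq n - step (gseq n) n) x = gseq n x - step (gseq n) n x := rfl
        rw [this, hse, hδhalf n]
        exact hspec.2.2 x hx
  set q : ℕ → G → ℂ := fun n => step (gseq n) n with hqdef
  have hqspec : ∀ n, IsAlmostPeriodic (q n) ∧ (∀ y, ‖q n y‖ ≤ 2 * δ n) ∧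
      ∀ x ∈ E, ‖gseq n x - q n x‖ ≤ δ n / 2 := by
    intro n
    have hse : q n = (stepLemma h (gseq n) (δ n) (hδpos n) (inv n)).choose := dif_pos (inv n)
    rw [hse]
    exact (stepLemma h (gseq n) (δ n) (hδpos n) (inv n)).choose_spec
  have hgS : ∀ n x, gseq n x = f x - ∑ k ∈ Finset.range n, q k x := by
    intro n
    induction n with
    | zero => intro x; simp [hgdef]
    | succ n ih =>
        intro x
        rw [hgsucc n]
        have : (gseq n - step (gseq n) n) x = gseq n x - q n x := rfl
        rw [this, ih x, Finset.sum_range_succ]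
        ring
  -- summability
  have hbsum : Summable (fun n : ℕ => 2 * δ n) := by
    have hgeo : Summable (fun n : ℕ => (1/2 : ℝ)^n) :=
      summable_geometric_of_lt_one (by norm_num) (by norm_num)
    have := hgeo.mul_left (2 * C')
    refine this.congr (fun n => ?_)
    simp [hδdef]; ring
  have hsum : ∀ x, Summable (fun n => q n x) := by
    intro x
    refine Summable.of_norm_bounded hbsum fun n => ?_
    exact (hqspec n).2.1 x
  set ψ : G → ℂ := fun x => ∑' n, q n x with hψdef
  have hgeoshift : ∀ n : ℕ, ∑' k : ℕ, (2 * δ (k+n)) = 4 * δ n := by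
    intro n
    have h2 : ∀ k : ℕ, 2 * δ (k+n) = (2 * δ n) * (1/2:ℝ)^k := by
      intro k
      simp only [hδdef, pow_add]
      ring
    calc ∑' k : ℕ, (2 * δ (k+n)) = ∑' k : ℕ, (2 * δ n) * (1/2:ℝ)^k := by
          exact tsum_congr h2
      _ = (2 * δ n) * ∑' k : ℕ, (1/2:ℝ)^k := tsum_mul_left
      _ = (2 * δ n) * 2 := by
          rw [tsum_geometric_of_lt_one (by norm_num) (by norm_num)]; norm_num
      _ = 4 * δ n := by ring
  have htail : ∀ x n, ‖ψ x - ∑ k ∈ Finset.range n, q k x‖ ≤ 4 * δ n := by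
    intro x n
    have h1 : ψ x - ∑ k ∈ Finset.range n, q k x = ∑' k : ℕ, q (k+n) x := by
      have h2 := (hsum x).sum_add_tsum_nat_add n
      rw [hψdef]
      simp only []
      linear_combination -h2
    rw [h1]
    have hns : Summable (fun k : ℕ => ‖q (k+n) x‖) := by
      refine Summable.of_nonneg_of_le (fun k => norm_nonneg _) (fun k => ?_)
        ((summable_nat_add_iff n).2 hbsum)
      exact (hqspec (k+n)).2.1 x
    calc ‖∑' k : ℕ, q (k+n) x‖ ≤ ∑' k : ℕ, ‖q (k+n) x‖ := norm_tsum_le_tsum_norm hns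
      _ ≤ ∑' k : ℕ, (2 * δ (k+n)) := by
          refine Summable.tsum_le_tsum (fun k => ?_) hns ((summable_nat_add_iff n).2 hbsum)
          exact (hqspec (k+n)).2.1 x
      _ = 4 * δ n := hgeoshift n
  have hSAP : ∀ n, IsAlmostPeriodic (fun x => ∑ k ∈ Finset.range n, q k x) := by
    intro n
    induction n with
    | zero => simpa using IsTrigPoly.zero.isAlmostPeriodic
    | succ n ih =>
        have h2 : (fun x => ∑ k ∈ Finset.range (n+1), q k x) =
            (fun x => ∑ k ∈ Finset.range n, q k x) + q n :=
          funext fun x => by rw [Finset.sum_range_succ]; rfl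
        rw [h2]
        exact ih.add (hqspec n).1
  refine ⟨ψ, ?_, ?_⟩
  · apply isAlmostPeriodic_of_approx
    intro ε hε
    obtain ⟨n, hn⟩ := exists_pow_lt_of_lt_one (show (0:ℝ) < ε / (4 * C') by positivity)
      (show (1/2:ℝ) < 1 by norm_num)
    refine ⟨fun x => ∑ k ∈ Finset.range n, q k x, hSAP n, fun x => le_trans (htail x n) ?_⟩
    have h6 : 4 * δ n = 4 * C' * (1/2)^n := by rw [hδdef]; ring
    rw [h6]
    have h7 : 4 * C' * (1/2:ℝ)^n < 4 * C' * (ε / (4*C')) :=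
      mul_lt_mul_of_pos_left hn (by positivity)
    have h8 : 4 * C' * (ε / (4*C')) = ε := by field_simp
    linarith
  · intro x hx
    have hb : ∀ n, ‖ψ x - f x‖ ≤ 5 * δ n := by
      intro n
      have h1 : ψ x - f x = (ψ x - ∑ k ∈ Finset.range n, q k x) + (-(gseq n x)) := by
        rw [hgS n x]; ring
      rw [h1]
      calc ‖_‖ ≤ ‖ψ x - ∑ k ∈ Finset.range n, q k x‖ +
            ‖-(gseq n x)‖ := norm_add_le _ _
        _ ≤ 4 * δ n + δ n := by
            rw [norm_neg]
            exact add_le_add (htail x n) (inv n x hx)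
        _ = 5 * δ n := by ring
    have hlim : Filter.Tendsto (fun n : ℕ => 5 * δ n) Filter.atTop (nhds 0) := by
      have h2 : Filter.Tendsto (fun n : ℕ => (1/2:ℝ)^n) Filter.atTop (nhds 0) :=
        tendsto_pow_atTop_nhds_zero_of_lt_one (by norm_num) (by norm_num)
      have h3 := h2.const_mul (5 * C')
      simp only [mul_zero] at h3
      convert h3 using 2 with n
      rw [hδdef]; ring
    have h4 : ‖ψ x - f x‖ ≤ 0 := ge_of_tendsto' hlim hb
    have h5 : ‖ψ x - f x‖ = 0 :=
      le_antisymm h4 (norm_nonneg _)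
    exact sub_eq_zero.mp (norm_eq_zero.mp h5)

end main

/-- If every bounded `f : E → ℂ` can be uniformly approximated on `E` by restrictions of
trigonometric polynomials, then `E` is an `I₀` set. -/
theorem stmt_17 {G : Type*} [AddCommGroup G] (E : Set G)
    (h : ∀ f : G → ℂ, (∃ C : ℝ, ∀ x ∈ E, ‖f x‖ ≤ C) →
      ∀ ε : ℝ, 0 < ε → ∃ p : G → ℂ, IsTrigPoly p ∧ ∀ x ∈ E, ‖f x - p x‖ ≤ ε) :
    IsI0Set E := by
  intro f hf
  exact main_thm E h f hf
end

section
/- Every subset of {2^n − 2^m : n, m ∈ ℕ} ⊆ ℤ which is a set of Bohr recurrence is a set of chromatic recurrence. -/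
open Pointwise

open Complex Finset

noncomputable def Complex.abs : AbsoluteValue ℂ ℝ where
  toFun z := ‖z‖
  map_mul' := norm_mul
  nonneg' := norm_nonneg
  eq_zero' _ := norm_eq_zero
  add_le' := norm_add_le

lemma Complex.abs_I : Complex.abs Complex.I = 1 := by
  show ‖Complex.I‖ = 1
  simp

lemma Complex.abs_ofReal (r : ℝ) : Complex.abs (r : ℂ) = |r| := by
  show ‖(r : ℂ)‖ = |r|
  simp

lemma Complex.abs_natCast (n : ℕ) : Complex.abs (n : ℂ) = n := by
  show ‖(n : ℂ)‖ = n
  simp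

lemma Complex.abs_exp (z : ℂ) : Complex.abs (Complex.exp z) = Real.exp z.re :=
  Complex.norm_exp z

lemma Complex.abs_exp_sub_one_le {x : ℂ} (hx : Complex.abs x ≤ 1) :
    Complex.abs (Complex.exp x - 1) ≤ 2 * Complex.abs x :=
  Complex.norm_exp_sub_one_le hx

noncomputable def ee (θ : ℝ) : ℂ := Complex.exp (2 * Real.pi * θ * Complex.I)

lemma ee_add (θ φ : ℝ) : ee (θ + φ) = ee θ * ee φ := by
  rw [ee, ee, ee, ← Complex.exp_add]
  congr 1
  push_cast
  ring

lemma abs_ee (θ : ℝ) : Complex.abs (ee θ) = 1 := by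
  rw [ee, Complex.abs_exp]
  norm_num [Complex.mul_I_re]

lemma ee_int (k : ℤ) : ee k = 1 := by
  rw [ee, Complex.exp_eq_one_iff]
  exact ⟨k, by push_cast; ring⟩

lemma ee_int_add (k : ℤ) (θ : ℝ) : ee (k + θ) = ee θ := by
  rw [ee_add, ee_int, one_mul]

lemma ee_pow (θ : ℝ) (n : ℕ) : ee θ ^ n = ee (n * θ) := by
  rw [ee, ee, ← Complex.exp_nat_mul]
  congr 1
  push_cast
  ring

lemma ee_eq_one_iff {θ : ℝ} : ee θ = 1 ↔ ∃ k : ℤ, θ = k := by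
  rw [ee, Complex.exp_eq_one_iff]
  constructor
  · rintro ⟨n, hn⟩
    refine ⟨n, ?_⟩
    have hpi : (2 * Real.pi : ℂ) ≠ 0 := by simp [Real.pi_ne_zero]
    have h2 : (2 * Real.pi : ℂ) * θ = 2 * Real.pi * (n : ℂ) := by
      have := mul_right_cancel₀ Complex.I_ne_zero
        (hn.trans (by push_cast; ring) : 2 * (Real.pi:ℂ) * θ * Complex.I
          = 2 * Real.pi * (n:ℂ) * Complex.I)
      exact this
    have := mul_left_cancel₀ hpi h2
    exact_mod_cast this
  · rintro ⟨k, hk⟩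
    exact ⟨k, by rw [hk]; push_cast; ring⟩

lemma abs_ee_sub_ee (θ φ : ℝ) : Complex.abs (ee θ - ee φ) ≤ 13 * |θ - φ| := by
  have habsz : Complex.abs (((2 * Real.pi * (θ - φ) : ℝ) : ℂ) * Complex.I)
      = 2 * Real.pi * |θ - φ| := by
    rw [map_mul, Complex.abs_I, mul_one, Complex.abs_ofReal, abs_mul]
    rw [abs_of_pos (by positivity : (0:ℝ) < 2 * Real.pi)]
  have heq : ee (θ - φ) = Complex.exp (((2 * Real.pi * (θ - φ) : ℝ) : ℂ) * Complex.I) := by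
    rw [ee]; congr 1; push_cast; ring
  have hpi : Real.pi < 3.15 := Real.pi_lt_d2
  have hd : (0:ℝ) ≤ |θ - φ| := abs_nonneg _
  rcases le_or_gt (2 * Real.pi * |θ - φ|) 1 with hle | hlt
  · have key : ee θ - ee φ = ee φ * (ee (θ - φ) - 1) := by
      rw [mul_sub, mul_one, ← ee_add]
      ring_nf
    rw [key, map_mul, abs_ee, one_mul, heq]
    calc Complex.abs (Complex.exp (((2 * Real.pi * (θ - φ) : ℝ) : ℂ) * Complex.I) - 1)
        ≤ 2 * Complex.abs (((2 * Real.pi * (θ - φ) : ℝ) : ℂ) * Complex.I) :=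
          Complex.abs_exp_sub_one_le (by rw [habsz]; exact hle)
      _ = 4 * Real.pi * |θ - φ| := by rw [habsz]; ring
      _ ≤ 13 * |θ - φ| := by nlinarith
  · have h2 : Complex.abs (ee θ - ee φ) ≤ 2 := by
      calc Complex.abs (ee θ - ee φ) ≤ Complex.abs (ee θ) + Complex.abs (ee φ) :=
            (AbsoluteValue.sub_le_add _ _ _)
        _ = 2 := by rw [abs_ee, abs_ee]; norm_num
    nlinarith
lemma geom_ee (M : ℕ) (hM : 0 < M) (d : ℤ) :
    ∑ c ∈ Finset.range M, ee (d * c / M) = if (M:ℤ) ∣ d then (M:ℂ) else 0 := by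
  have hM0 : (M : ℝ) ≠ 0 := Nat.cast_ne_zero.mpr hM.ne'
  have hterm : ∀ c : ℕ, ee (d * c / M) = ee ((d : ℝ) / M) ^ c := by
    intro c
    rw [ee_pow]
    congr 1
    field_simp
  split_ifs with hdvd
  · obtain ⟨k, hk⟩ := hdvd
    have : ∀ c ∈ Finset.range M, ee (d * c / M) = 1 := by
      intro c _
      have : ((d : ℝ) * c / M) = ((k * c : ℤ) : ℝ) := by
        subst hk; push_cast; field_simp
      rw [this, ee_int]
    rw [Finset.sum_congr rfl this]
    simp
  · have hω : ee ((d : ℝ) / M) ≠ 1 := by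
      intro hone
      obtain ⟨j, hj⟩ := ee_eq_one_iff.mp hone
      apply hdvd
      refine ⟨j, ?_⟩
      have : (d : ℝ) = M * j := by
        field_simp at hj
        linarith [hj]
      exact_mod_cast this
    rw [Finset.sum_congr rfl (fun c _ => hterm c), geom_sum_eq hω]
    have : ee ((d:ℝ)/M) ^ M = 1 := by
      rw [ee_pow]
      have : (M : ℝ) * ((d:ℝ)/M) = ((d : ℤ) : ℝ) := by field_simp
      rw [this, ee_int]
    rw [this]
    simp

lemma two_pow_mod_dvd (B n : ℕ) (hB : 0 < B) :
    (2^B - 1 : ℤ) ∣ 2^n - 2^(n % B) := by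
  have h1 : (2:ℤ)^n = 2^(n % B) * ((2^B)^(n / B)) := by
    rw [← pow_mul, ← pow_add]
    congr 1
    rw [Nat.mod_add_div]
  have h2 : (2:ℤ)^B - 1 ∣ (2^B)^(n / B) - 1 := by
    simpa using sub_dvd_pow_sub_pow ((2:ℤ)^B) 1 (n / B)
  calc (2:ℤ)^B - 1 ∣ 2^(n % B) * ((2^B)^(n / B) - 1) := Dvd.dvd.mul_left h2 _
    _ = 2^n - 2^(n % B) := by rw [mul_sub, mul_one, ← h1]

lemma dvd_char (B n j : ℕ) (hB : 2 ≤ B) (hj : j < B) :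
    (2^B - 1 : ℤ) ∣ 2^n - 2^j ↔ j = n % B := by
  have hBpos : 0 < B := by omega
  have hmod := two_pow_mod_dvd B n hBpos
  constructor
  · intro hdvd
    by_contra hne
    set s := n % B with hs
    have hsB : s < B := Nat.mod_lt _ hBpos
    have hd : (2^B - 1 : ℤ) ∣ 2^s - 2^j := by
      have h := dvd_sub hdvd hmod
      have heq : (2^n - 2^j : ℤ) - (2^n - 2^s) = 2^s - 2^j := by ring
      rwa [heq] at h
    have hne2 : (2:ℤ)^s - 2^j ≠ 0 := by
      intro h0
      apply hne
      have h2 : (2:ℤ)^s = 2^j := by linarith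
      have h3 : (2:ℕ)^s = 2^j := by exact_mod_cast h2
      exact (Nat.pow_right_injective (le_refl 2) h3).symm
    have habs : |(2:ℤ)^s - 2^j| < 2^B - 1 := by
      have h1 : (2:ℤ)^s ≤ 2^(B-1) := pow_le_pow_right₀ (by norm_num) (by omega)
      have h2 : (2:ℤ)^j ≤ 2^(B-1) := pow_le_pow_right₀ (by norm_num) (by omega)
      have h3 : (1:ℤ) ≤ 2^s := by exact_mod_cast Nat.one_le_two_pow
      have h4 : (1:ℤ) ≤ 2^j := by exact_mod_cast Nat.one_le_two_pow
      have h5 : (2:ℤ)^B = 2 * 2^(B-1) := by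
        rw [← pow_succ']
        congr 1
        omega
      have h6 : (2:ℤ) ≤ 2^(B-1) := by
        calc (2:ℤ) = 2^1 := (pow_one 2).symm
        _ ≤ 2^(B-1) := pow_le_pow_right₀ (by norm_num) (by omega)
      rw [abs_lt]
      constructor <;> linarith
    have := Int.le_of_dvd (abs_pos.mpr hne2) ((dvd_abs _ _).mpr hd)
    linarith
  · rintro rfl
    exact hmod

lemma pow_mul_inv_pow_le (n k : ℕ) (h : n ≤ k) : (2:ℝ)^n * (2⁻¹)^k = (2⁻¹)^(k - n) := by
  have h2 : (2:ℝ)^n * (2⁻¹)^n = 1 := by rw [← mul_pow]; norm_num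
  have h3 : (2⁻¹:ℝ)^k = 2⁻¹^n * 2⁻¹^(k-n) := by rw [← pow_add]; congr 1; omega
  rw [h3, ← mul_assoc, h2, one_mul]

lemma pow_mul_inv_pow_ge (n k : ℕ) (h : k ≤ n) : (2:ℝ)^n * (2⁻¹)^k = 2^(n - k) := by
  have h2 : (2:ℝ)^k * (2⁻¹)^k = 1 := by rw [← mul_pow]; norm_num
  have h3 : (2:ℝ)^n = 2^k * 2^(n-k) := by rw [← pow_add]; congr 1; omega
  calc (2:ℝ)^n * (2⁻¹)^k = ((2:ℝ)^k * (2⁻¹)^k) * 2^(n-k) := by rw [h3]; ring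
    _ = 2^(n-k) := by rw [h2, one_mul]

lemma alph_summable (a : ℕ → ℝ) (B j : ℕ) (hB : 1 ≤ B)
    (ha0 : ∀ n, 0 ≤ a n) (ha1 : ∀ n, a n ≤ 1) :
    Summable (fun m => a (j + B*m) * (2⁻¹:ℝ)^(j + B*m)) := by
  apply Summable.of_nonneg_of_le (fun m => mul_nonneg (ha0 _) (by positivity))
    (fun m => ?_) (summable_geometric_of_lt_one (by norm_num) (by norm_num : (2⁻¹:ℝ) < 1))
  calc a (j + B*m) * (2⁻¹:ℝ)^(j + B*m) ≤ 1 * (2⁻¹:ℝ)^(j + B*m) :=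
        mul_le_mul_of_nonneg_right (ha1 _) (by positivity)
    _ = (2⁻¹:ℝ)^(j + B*m) := one_mul _
    _ ≤ (2⁻¹:ℝ)^m := by
        apply pow_le_pow_of_le_one (by norm_num) (by norm_num)
        calc m ≤ B * m := Nat.le_mul_of_pos_left m (by omega)
          _ ≤ j + B * m := Nat.le_add_left _ _

lemma alph_spec (a : ℕ → ℝ) (B : ℕ) (hB : 1 ≤ B)
    (ha0 : ∀ n, 0 ≤ a n) (ha1 : ∀ n, a n ≤ 1)
    (z : ℕ → ℤ) (haz : ∀ n, a n = z n / 2^B)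
    (j l : ℕ) :
    ∃ (Iz : ℤ) (ε : ℝ), (2:ℝ)^(j + B*l) * (∑' m, a (j + B*m) * (2⁻¹:ℝ)^(j + B*m))
      = Iz + a (j + B*l) + ε ∧ 0 ≤ ε ∧ ε ≤ 2 * (2⁻¹:ℝ)^B := by
  set n := j + B * l with hn
  set F : ℕ → ℝ := fun m => (2:ℝ)^n * (a (j + B*m) * (2⁻¹:ℝ)^(j + B*m)) with hF
  have hsum := alph_summable a B j hB ha0 ha1
  have hFsum : Summable F := hsum.mul_left _
  have h1 : (2:ℝ)^n * (∑' m, a (j + B*m) * (2⁻¹:ℝ)^(j + B*m)) = ∑' m, F m :=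
    (tsum_mul_left).symm
  have hsplit : (∑ i ∈ range (l+1), F i) + (∑' i, F (i + (l+1))) = ∑' m, F m :=
    Summable.sum_add_tsum_nat_add (l+1) hFsum
  -- the tail
  set ε : ℝ := ∑' i, F (i + (l+1)) with hε
  have htail : ∀ i : ℕ, F (i + (l+1)) = a (j + B*(i+(l+1))) * (2⁻¹:ℝ)^(B*(i+1)) := by
    intro i
    have e1 : B*(i+(l+1)) = B*i + B*l + B := by ring
    have e2 : B*(i+1) = B*i + B := by ring
    have hle : n ≤ j + B*(i+(l+1)) := by simp only [hn]; omega
    have hexp : j + B*(i+(l+1)) - n = B*(i+1) := by simp only [hn]; omega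
    have hkey := pow_mul_inv_pow_le n (j + B*(i+(l+1))) hle
    calc F (i+(l+1)) = a (j + B*(i+(l+1))) * ((2:ℝ)^n * 2⁻¹^(j + B*(i+(l+1)))) := by
          rw [hF]; ring
      _ = a (j + B*(i+(l+1))) * (2⁻¹:ℝ)^(B*(i+1)) := by rw [hkey, hexp]
  have hε0 : 0 ≤ ε := by
    apply tsum_nonneg
    intro i
    rw [htail i]
    exact mul_nonneg (ha0 _) (by positivity)
  have hεle : ε ≤ 2 * (2⁻¹:ℝ)^B := by
    have hb : ∀ i : ℕ, F (i + (l+1)) ≤ (2⁻¹:ℝ)^B * (2⁻¹:ℝ)^i := by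
      intro i
      rw [htail i]
      calc a (j + B*(i+(l+1))) * (2⁻¹:ℝ)^(B*(i+1)) ≤ 1 * (2⁻¹:ℝ)^(B*(i+1)) :=
            mul_le_mul_of_nonneg_right (ha1 _) (by positivity)
        _ = (2⁻¹:ℝ)^(B*(i+1)) := one_mul _
        _ ≤ (2⁻¹:ℝ)^(B+i) := by
            apply pow_le_pow_of_le_one (by norm_num) (by norm_num)
            nlinarith [Nat.zero_le (B*i)]
        _ = (2⁻¹:ℝ)^B * (2⁻¹:ℝ)^i := pow_add _ _ _
    have hs1 : Summable (fun i => F (i + (l+1))) := (summable_nat_add_iff (l+1)).mpr hFsum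
    have hs2 : Summable (fun i => (2⁻¹:ℝ)^B * (2⁻¹:ℝ)^i) :=
      (summable_geometric_of_lt_one (by norm_num) (by norm_num : (2⁻¹:ℝ) < 1)).mul_left _
    calc ε ≤ ∑' i, (2⁻¹:ℝ)^B * (2⁻¹:ℝ)^i := Summable.tsum_le_tsum hb hs1 hs2
      _ = (2⁻¹:ℝ)^B * (1 - 2⁻¹)⁻¹ := by
          rw [tsum_mul_left, tsum_geometric_of_lt_one (by norm_num) (by norm_num)]
      _ = 2 * (2⁻¹:ℝ)^B := by norm_num; ring
  -- the head
  have hFl : F l = a n := by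
    have hkey := pow_mul_inv_pow_ge n n le_rfl
    simp only [Nat.sub_self, pow_zero] at hkey
    calc F l = a n * ((2:ℝ)^n * 2⁻¹^n) := by rw [hF]; dsimp only; rw [← hn]; ring
      _ = a n := by rw [hkey, mul_one]
  have hhead : ∃ Iz : ℤ, (∑ i ∈ range l, F i) = (Iz : ℝ) := by
    refine ⟨∑ i ∈ range l, z (j + B*i) * 2^(B*(l-i) - B), ?_⟩
    push_cast
    apply Finset.sum_congr rfl
    intro i hi
    have hil : i < l := Finset.mem_range.mp hi
    have e1 : B*(l-i) = B*l - B*i := by rw [Nat.mul_sub]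
    have e2 : B*i ≤ B*l := Nat.mul_le_mul_left B hil.le
    have hke : j + B*i ≤ n := by simp only [hn]; omega
    have hexp : n - (j + B*i) = B*(l-i) := by simp only [hn]; omega
    have hBle : B ≤ B*(l-i) := Nat.le_mul_of_pos_right B (by omega)
    have hkey := pow_mul_inv_pow_ge n (j + B*i) hke
    have hsplit2 : (2:ℝ)^(B*(l-i)) = 2^(B*(l-i) - B) * 2^B := by
      rw [← pow_add]; congr 1; omega
    calc (2:ℝ)^n * (a (j + B*i) * 2⁻¹ ^ (j + B*i))
        = a (j + B*i) * ((2:ℝ)^n * 2⁻¹^(j + B*i)) := by ring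
      _ = a (j + B*i) * (2:ℝ)^(B*(l-i)) := by rw [hkey, hexp]
      _ = ((z (j + B*i) : ℝ) / 2^B) * ((2:ℝ)^(B*(l-i) - B) * 2^B) := by
          rw [haz (j + B*i), hsplit2]
      _ = (z (j + B*i) : ℝ) * 2^(B*(l-i) - B) := by field_simp
  obtain ⟨Iz, hIz⟩ := hhead
  refine ⟨Iz, ε, ?_, hε0, hεle⟩
  rw [h1, ← hsplit, Finset.sum_range_succ, hIz, hFl]
noncomputable def trigP (B M : ℕ) (α : ℕ → ℝ) (x : ℤ) : ℂ :=
  ∑ j ∈ Finset.range B, ∑ c ∈ Finset.range M,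
    (1/(M:ℂ)) * ee (-((2:ℝ)^j * c) / M) * ee ((x:ℝ) * ((c:ℝ) / M + α j))

lemma trigP_apply_pow (B M : ℕ) (hB : 2 ≤ B) (hM : M = 2^B - 1) (α : ℕ → ℝ) (n : ℕ) :
    trigP B M α ((2:ℤ)^n) = ee ((2:ℝ)^n * α (n % B)) := by
  have hBpos : 0 < B := by omega
  have hMpos : 0 < M := by
    have : (4:ℕ) ≤ 2^B := by
      calc (4:ℕ) = 2^2 := rfl
      _ ≤ 2^B := Nat.pow_le_pow_right (by norm_num) hB
    omega
  have hM0 : (M : ℝ) ≠ 0 := Nat.cast_ne_zero.mpr hMpos.ne'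
  have hMZ : (M : ℤ) = 2^B - 1 := by
    rw [hM]
    push_cast [Nat.one_le_two_pow]
    ring
  have inner : ∀ j ∈ Finset.range B,
      (∑ c ∈ Finset.range M, (1/(M:ℂ)) * ee (-((2:ℝ)^j * c) / M)
        * ee ((((2:ℤ)^n :ℤ):ℝ) * ((c:ℝ) / M + α j)))
      = if j = n % B then ee ((2:ℝ)^n * α j) else 0 := by
    intro j hj
    have hjB : j < B := Finset.mem_range.mp hj
    have hterm : ∀ c ∈ Finset.range M,
        (1/(M:ℂ)) * ee (-((2:ℝ)^j * c) / M) * ee ((((2:ℤ)^n :ℤ):ℝ) * ((c:ℝ) / M + α j))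
        = (1/(M:ℂ)) * ee ((((2:ℤ)^n - 2^j : ℤ):ℝ) * c / M) * ee ((2:ℝ)^n * α j) := by
      intro c _
      have h1 : (((2:ℤ)^n :ℤ):ℝ) * ((c:ℝ) / M + α j)
          = (2:ℝ)^n * c / M + (2:ℝ)^n * α j := by push_cast; ring
      have h2 : (-((2:ℝ)^j * c) / M) + ((2:ℝ)^n * c / M)
          = (((2:ℤ)^n - 2^j : ℤ):ℝ) * c / M := by push_cast; ring
      rw [h1, ee_add, ← h2, ee_add]
      ring
    rw [Finset.sum_congr rfl hterm, ← Finset.sum_mul, ← Finset.mul_sum]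
    have hgeom : ∑ c ∈ Finset.range M, ee ((((2:ℤ)^n - 2^j : ℤ):ℝ) * c / M)
        = if (M:ℤ) ∣ ((2:ℤ)^n - 2^j) then (M:ℂ) else 0 := geom_ee M hMpos _
    rw [hgeom, hMZ]
    rw [show ((2:ℤ)^n - 2^j = (2:ℤ)^n - 2^j) from rfl]
    by_cases hd : j = n % B
    · rw [if_pos ((dvd_char B n j hB hjB).mpr hd), if_pos hd]
      have hMC : (M:ℂ) ≠ 0 := Nat.cast_ne_zero.mpr hMpos.ne'
      field_simp
    · rw [if_neg (fun hc => hd ((dvd_char B n j hB hjB).mp hc)), if_neg hd]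
      simp
  rw [trigP, Finset.sum_congr rfl inner, Finset.sum_ite_eq' (Finset.range B) (n % B)]
  rw [if_pos (Finset.mem_range.mpr (Nat.mod_lt n hBpos))]

lemma trigP_shift (B M : ℕ) (hMpos : 0 < M) (α : ℕ → ℝ) (x s : ℤ) (ε' : ℝ)
    (hβ : ∀ j, j < B → ∀ c, c < M → ∃ k : ℤ, |(s:ℝ) * ((c:ℝ)/M + α j) - k| ≤ ε') :
    Complex.abs (trigP B M α (x + s) - trigP B M α x) ≤ B * (13 * ε') := by
  have hM0 : (M : ℝ) ≠ 0 := Nat.cast_ne_zero.mpr hMpos.ne'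
  rw [trigP, trigP, ← Finset.sum_sub_distrib]
  have hj_bound : ∀ j ∈ Finset.range B, Complex.abs ((∑ c ∈ Finset.range M, (1/(M:ℂ))
          * ee (-((2:ℝ)^j * c) / M) * ee (((x+s : ℤ):ℝ) * ((c:ℝ) / M + α j)))
        - ∑ c ∈ Finset.range M, (1/(M:ℂ)) * ee (-((2:ℝ)^j * c) / M)
          * ee ((x:ℝ) * ((c:ℝ) / M + α j))) ≤ 13 * ε' := by
    intro j hj
    have hjB : j < B := Finset.mem_range.mp hj
    rw [← Finset.sum_sub_distrib]
    have hc_bound : ∀ c ∈ Finset.range M, Complex.abs ((1/(M:ℂ))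
          * ee (-((2:ℝ)^j * c) / M) * ee (((x+s : ℤ):ℝ) * ((c:ℝ) / M + α j))
        - (1/(M:ℂ)) * ee (-((2:ℝ)^j * c) / M) * ee ((x:ℝ) * ((c:ℝ) / M + α j)))
        ≤ (1/(M:ℝ)) * (13 * ε') := by
      intro c hc
      have hcM : c < M := Finset.mem_range.mp hc
      obtain ⟨k, hk⟩ := hβ j hjB c hcM
      have hsplit : (((x+s : ℤ):ℝ) * ((c:ℝ) / M + α j))
          = (x:ℝ) * ((c:ℝ) / M + α j) + (s:ℝ) * ((c:ℝ) / M + α j) := by push_cast; ring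
      have hfac : (1/(M:ℂ)) * ee (-((2:ℝ)^j * c) / M) * ee (((x+s : ℤ):ℝ) * ((c:ℝ) / M + α j))
          - (1/(M:ℂ)) * ee (-((2:ℝ)^j * c) / M) * ee ((x:ℝ) * ((c:ℝ) / M + α j))
          = (1/(M:ℂ)) * ee (-((2:ℝ)^j * c) / M) * ee ((x:ℝ) * ((c:ℝ) / M + α j))
            * (ee ((s:ℝ) * ((c:ℝ) / M + α j)) - ee (k:ℝ)) := by
        rw [hsplit, ee_add, ee_int]
        push_cast
        ring
      rw [hfac]
      rw [map_mul, map_mul, map_mul, abs_ee, abs_ee, map_div₀, map_one]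
      simp only [Complex.abs_natCast, mul_one, one_mul]
      have h13 : Complex.abs (ee ((s:ℝ) * ((c:ℝ) / M + α j)) - ee (k:ℝ))
          ≤ 13 * ε' := le_trans (abs_ee_sub_ee _ _)
          (by nlinarith [abs_nonneg ((s:ℝ) * ((c:ℝ) / M + α j) - (k:ℝ))])
      have hMinv : (0:ℝ) ≤ 1 / (M:ℝ) := by positivity
      exact mul_le_mul_of_nonneg_left h13 hMinv
    refine le_trans (Complex.abs.sum_le _ _) ?_
    refine le_trans (Finset.sum_le_sum hc_bound) ?_
    rw [Finset.sum_const, Finset.card_range, nsmul_eq_mul]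
    field_simp
    exact le_rfl
  refine le_trans (Complex.abs.sum_le _ _) ?_
  refine le_trans (Finset.sum_le_sum hj_bound) ?_
  rw [Finset.sum_const, Finset.card_range, nsmul_eq_mul]

set_option maxHeartbeats 2000000 in
/-- Every subset of `{2^n - 2^m : n, m ∈ ℕ} ⊆ ℤ` which is a set of Bohr recurrence is a set
of chromatic recurrence. -/
theorem stmt_18 (S : Set ℤ)
    (hS : S ⊆ {x : ℤ | ∃ n m : ℕ, x = 2 ^ n - 2 ^ m})
    (h : BohrRecurrent S) : ChromaticRecurrent S := by
  intro r f
  obtain _|_|r := r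
  · exact (f 0).elim0
  · obtain ⟨s, hsS, -⟩ := h 0 0 1 one_pos
    have h1 := (f 0).is_lt
    have h2 := (f s).is_lt
    exact ⟨0, s, Fin.ext (by omega), by simpa using hsS⟩
  revert f
  set R : ℕ := r + 1 + 1 with hR
  intro f
  have hr2 : 2 ≤ R := by omega
  have hRpos : (0:ℝ) < R := by positivity
  -- the points on the circle
  set pts : Fin R → ℂ := fun q => ee ((q.val : ℝ) / R) with hpts
  have hpts_inj : Function.Injective pts := by
    intro j k hjk
    have h1 : ee ((k.val:ℝ)/R) * ee ((j.val:ℝ)/R - (k.val:ℝ)/R) = ee ((k.val:ℝ)/R) * 1 := by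
      rw [mul_one, ← ee_add]
      have : (k.val:ℝ)/R + ((j.val:ℝ)/R - (k.val:ℝ)/R) = (j.val:ℝ)/R := by ring
      rw [this]
      exact hjk
    have hne : ee ((k.val:ℝ)/R) ≠ 0 := by
      intro h0
      have := abs_ee ((k.val:ℝ)/R)
      rw [h0] at this
      simp at this
    have h2 : ee ((j.val:ℝ)/R - (k.val:ℝ)/R) = 1 := mul_left_cancel₀ hne h1
    obtain ⟨z, hz⟩ := ee_eq_one_iff.mp h2
    have hz' : (j.val:ℝ) - k.val = z * R := by
      have hR0 : (R:ℝ) ≠ 0 := hRpos.ne'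
      field_simp at hz
      linarith
    have hjR : (j.val:ℝ) < R := by exact_mod_cast j.is_lt
    have hkR : (k.val:ℝ) < R := by exact_mod_cast k.is_lt
    have hj0 : (0:ℝ) ≤ (j.val:ℝ) := by positivity
    have hk0 : (0:ℝ) ≤ (k.val:ℝ) := by positivity
    have hz0 : z = 0 := by
      rcases lt_trichotomy z 0 with hlt | heq | hgt
      · exfalso
        have : (z:ℝ) ≤ -1 := by exact_mod_cast Int.le_sub_one_of_lt hlt
        nlinarith
      · exact heq
      · exfalso
        have : (1:ℝ) ≤ (z:ℝ) := by exact_mod_cast hgt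
        nlinarith
    have : (j.val:ℝ) = k.val := by rw [hz0] at hz'; push_cast at hz'; linarith
    exact Fin.ext (by exact_mod_cast this)
  -- the gap
  have hod_ne : (Finset.univ.offDiag : Finset (Fin R × Fin R)).Nonempty := by
    refine ⟨(⟨0, by omega⟩, ⟨1, by omega⟩), Finset.mem_offDiag.mpr ⟨Finset.mem_univ _,
      Finset.mem_univ _, ?_⟩⟩
    intro hc
    have := congrArg Fin.val hc
    simp at this
  set gap : ℝ := Finset.inf' _ hod_ne (fun q => Complex.abs (pts q.1 - pts q.2)) with hgap
  have hgap_pos : 0 < gap := by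
    rw [hgap, Finset.lt_inf'_iff]
    intro q hq
    obtain ⟨-, -, hne⟩ := Finset.mem_offDiag.mp hq
    have : pts q.1 ≠ pts q.2 := fun hc => hne (hpts_inj hc)
    exact AbsoluteValue.pos Complex.abs (sub_ne_zero.mpr this)
  have hgap_le : ∀ x y : Fin R, x ≠ y → gap ≤ Complex.abs (pts x - pts y) := by
    intro x y hxy
    rw [hgap]
    have hmem : (x, y) ∈ (Finset.univ.offDiag : Finset (Fin R × Fin R)) :=
      Finset.mem_offDiag.mpr ⟨Finset.mem_univ _, Finset.mem_univ _, hxy⟩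
    have h2 := Finset.inf'_le (fun q : Fin R × Fin R => Complex.abs (pts q.1 - pts q.2)) hmem
    exact h2
  -- choose B
  obtain ⟨B₀, hB₀⟩ := exists_pow_lt_of_lt_one (div_pos hgap_pos (by norm_num : (0:ℝ) < 400))
    (show (2⁻¹:ℝ) < 1 by norm_num)
  set B : ℕ := max B₀ 5 with hBdef
  have hB5 : 5 ≤ B := le_max_right _ _
  have hB2 : 2 ≤ B := by omega
  have hBpow : (2⁻¹:ℝ)^B < gap/400 := by
    calc (2⁻¹:ℝ)^B ≤ (2⁻¹:ℝ)^B₀ :=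
          pow_le_pow_of_le_one (by norm_num) (by norm_num) (le_max_left _ _)
      _ < gap/400 := hB₀
  set M : ℕ := 2^B - 1 with hMdef
  have hMpos : 0 < M := by
    have : (4:ℕ) ≤ 2^B := by
      calc (4:ℕ) = 2^2 := rfl
        _ ≤ 2^B := Nat.pow_le_pow_right (by norm_num) hB2
    omega
  -- targets and digits
  set t : ℕ → ℝ := fun n => ((f ((2:ℤ)^n)).val : ℝ) / R with ht
  have ht0 : ∀ n, 0 ≤ t n := fun n => by positivity
  have ht1 : ∀ n, t n < 1 := by
    intro n
    rw [ht]
    rw [div_lt_one hRpos]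
    exact_mod_cast (f ((2:ℤ)^n)).is_lt
  set z : ℕ → ℤ := fun n => ⌊(2:ℝ)^B * t n⌋ with hz
  set a : ℕ → ℝ := fun n => (z n : ℝ) / 2^B with ha
  have h2Bpos : (0:ℝ) < 2^B := by positivity
  have ha0 : ∀ n, 0 ≤ a n := by
    intro n
    apply div_nonneg _ h2Bpos.le
    exact_mod_cast Int.floor_nonneg.mpr (by positivity)
  have hfl : ∀ n, (z n : ℝ) ≤ 2^B * t n ∧ 2^B * t n < z n + 1 := by
    intro n
    exact ⟨Int.floor_le _, Int.lt_floor_add_one _⟩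
  have ha1 : ∀ n, a n ≤ 1 := by
    intro n
    rw [ha]
    rw [div_le_one h2Bpos]
    calc (z n : ℝ) ≤ 2^B * t n := (hfl n).1
      _ ≤ 2^B * 1 := by nlinarith [(ht1 n), h2Bpos]
      _ = 2^B := mul_one _
  have haz : ∀ n, a n = (z n : ℝ) / 2^B := fun n => rfl
  have hat : ∀ n, |a n - t n| ≤ (2⁻¹:ℝ)^B := by
    intro n
    have h1 := (hfl n).1
    have h2 := (hfl n).2
    have e : a n - t n = ((z n : ℝ) - 2^B * t n)/2^B := by
      rw [ha]
      field_simp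
    rw [e, abs_div, _root_.abs_of_pos h2Bpos]
    rw [show (2⁻¹:ℝ)^B = 1/2^B by rw [inv_pow, one_div]]
    gcongr
    rw [abs_le]
    constructor <;> linarith
  -- the frequencies
  set α : ℕ → ℝ := fun j => ∑' m, a (j + B*m) * (2⁻¹:ℝ)^(j + B*m) with hα
  -- interpolation bound
  have hinterp : ∀ n : ℕ,
      Complex.abs (trigP B M α ((2:ℤ)^n) - pts (f ((2:ℤ)^n))) ≤ 39 * (2⁻¹:ℝ)^B := by
    intro n
    obtain ⟨Iz, ε, heq, hε0, hεle⟩ := alph_spec a B (by omega) ha0 ha1 z haz (n % B) (n / B)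
    rw [Nat.mod_add_div n B] at heq
    have htp : trigP B M α ((2:ℤ)^n) = ee ((2:ℝ)^n * α (n % B)) :=
      trigP_apply_pow B M hB2 hMdef α n
    have hαn : α (n % B) = ∑' (m:ℕ), a (n % B + B*m) * (2⁻¹:ℝ)^(n % B + B*m) := by
      simp only [hα]
    have hee : ee ((2:ℝ)^n * α (n % B)) = ee (a n + ε) := by
      rw [hαn, heq]
      rw [show (Iz:ℝ) + a n + ε = (Iz:ℝ) + (a n + ε) by ring]
      exact ee_int_add Iz (a n + ε)
    have hptsval : pts (f ((2:ℤ)^n)) = ee (t n) := rfl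
    rw [htp, hee, hptsval]
    calc Complex.abs (ee (a n + ε) - ee (t n)) ≤ 13 * |a n + ε - t n| := abs_ee_sub_ee _ _
      _ ≤ 13 * (|a n - t n| + ε) := by
          have : |a n + ε - t n| ≤ |a n - t n| + ε := by
            rw [show a n + ε - t n = (a n - t n) + ε by ring]
            calc |(a n - t n) + ε| ≤ |a n - t n| + |ε| := abs_add_le _ _
              _ = |a n - t n| + ε := by rw [_root_.abs_of_nonneg hε0]
          linarith
      _ ≤ 13 * ((2⁻¹:ℝ)^B + 2 * (2⁻¹:ℝ)^B) := by
          have := hat n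
          have hp : (0:ℝ) ≤ (2⁻¹:ℝ)^B := by positivity
          nlinarith
      _ = 39 * (2⁻¹:ℝ)^B := by ring
  -- Bohr recurrence application
  set ε' : ℝ := gap / (26 * (B + 1)) with hε'
  have hε'pos : 0 < ε' := div_pos hgap_pos (by positivity)
  set b : Fin (B*M) → ℝ := fun i => (((i:ℕ) / B : ℕ) : ℝ) / M + α ((i:ℕ) % B) with hb
  set ρ : ℤ →+ (Fin (B*M) → AddCircle (1:ℝ)) :=
    { toFun := fun x => fun i => (((x:ℝ) * b i : ℝ) : AddCircle (1:ℝ))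
      map_zero' := by
        funext i
        show (((0:ℤ):ℝ) * b i : ℝ) = (0 : AddCircle (1:ℝ))
        norm_num
      map_add' := by
        intro u v
        funext i
        show ((((u+v:ℤ):ℝ) * b i : ℝ) : AddCircle (1:ℝ))
          = (((u:ℝ) * b i : ℝ) : AddCircle (1:ℝ)) + (((v:ℝ) * b i : ℝ) : AddCircle (1:ℝ))
        rw [← QuotientAddGroup.mk_add]
        congr 1
        push_cast
        ring } with hρ
  obtain ⟨s, hsS, hsmall⟩ := h (B*M) ρ ε' hε'pos
  have hβ : ∀ j, j < B → ∀ c, c < M → ∃ k : ℤ, |(s:ℝ) * ((c:ℝ)/M + α j) - k| ≤ ε' := by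
    intro j hj c hc
    have hiv : j + B*c < B*M := by
      calc j + B*c < B + B*c := by omega
        _ = B*(c+1) := by ring
        _ ≤ B*M := Nat.mul_le_mul_left B (by omega)
    set i : Fin (B*M) := ⟨j + B*c, hiv⟩ with hi
    have hmod : (j + B*c) % B = j := by
      rw [Nat.add_mul_mod_self_left, Nat.mod_eq_of_lt hj]
    have hdiv : (j + B*c) / B = c := by
      rw [Nat.add_mul_div_left _ _ (by omega : 0 < B), Nat.div_eq_of_lt hj]
      omega
    have hbi : b i = (c:ℝ)/M + α j := by
      rw [hb]
      show (((j + B*c) / B : ℕ) : ℝ) / M + α ((j + B*c) % B) = (c:ℝ)/M + α j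
      rw [hmod, hdiv]
    have := hsmall i
    rw [hρ] at this
    have hnorm : ‖(((s:ℝ) * b i : ℝ) : AddCircle (1:ℝ))‖ < ε' := this
    rw [AddCircle.norm_eq] at hnorm
    refine ⟨round ((1:ℝ)⁻¹ * ((s:ℝ) * b i)), ?_⟩
    rw [hbi] at hnorm ⊢
    simp only [inv_one, one_mul, mul_one] at hnorm ⊢
    exact hnorm.le
  -- conclude
  obtain ⟨n, m, hs_eq⟩ := hS hsS
  refine ⟨(2:ℤ)^m, (2:ℤ)^n, ?_, by rw [← hs_eq]; exact hsS⟩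
  by_contra hne
  have hgaple := hgap_le _ _ (fun hc => hne hc)
  have h1 := hinterp n
  have h2 := hinterp m
  have hshift : Complex.abs (trigP B M α ((2:ℤ)^m + s) - trigP B M α ((2:ℤ)^m))
      ≤ B * (13 * ε') := trigP_shift B M hMpos α ((2:ℤ)^m) s ε' hβ
  have hpow_eq : (2:ℤ)^m + s = (2:ℤ)^n := by rw [hs_eq]; ring
  rw [hpow_eq] at hshift
  have htri : Complex.abs (pts (f ((2:ℤ)^m)) - pts (f ((2:ℤ)^n)))
      ≤ 39 * (2⁻¹:ℝ)^B + (B * (13 * ε')) + 39 * (2⁻¹:ℝ)^B := by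
    calc Complex.abs (pts (f ((2:ℤ)^m)) - pts (f ((2:ℤ)^n)))
        = Complex.abs ((pts (f ((2:ℤ)^m)) - trigP B M α ((2:ℤ)^m))
          + (trigP B M α ((2:ℤ)^m) - trigP B M α ((2:ℤ)^n))
          + (trigP B M α ((2:ℤ)^n) - pts (f ((2:ℤ)^n)))) := by ring_nf
      _ ≤ Complex.abs ((pts (f ((2:ℤ)^m)) - trigP B M α ((2:ℤ)^m))
          + (trigP B M α ((2:ℤ)^m) - trigP B M α ((2:ℤ)^n)))
          + Complex.abs (trigP B M α ((2:ℤ)^n) - pts (f ((2:ℤ)^n))) :=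
            Complex.abs.add_le _ _
      _ ≤ Complex.abs (pts (f ((2:ℤ)^m)) - trigP B M α ((2:ℤ)^m))
          + Complex.abs (trigP B M α ((2:ℤ)^m) - trigP B M α ((2:ℤ)^n))
          + Complex.abs (trigP B M α ((2:ℤ)^n) - pts (f ((2:ℤ)^n))) := by
            have := Complex.abs.add_le (pts (f ((2:ℤ)^m)) - trigP B M α ((2:ℤ)^m))
              (trigP B M α ((2:ℤ)^m) - trigP B M α ((2:ℤ)^n))
            linarith
      _ ≤ 39 * (2⁻¹:ℝ)^B + (B * (13 * ε')) + 39 * (2⁻¹:ℝ)^B := by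
          have e2 : Complex.abs (pts (f ((2:ℤ)^m)) - trigP B M α ((2:ℤ)^m))
              = Complex.abs (trigP B M α ((2:ℤ)^m) - pts (f ((2:ℤ)^m))) := by
            rw [← AbsoluteValue.map_neg Complex.abs]
            ring_nf
          rw [e2]
          have e3 : Complex.abs (trigP B M α ((2:ℤ)^m) - trigP B M α ((2:ℤ)^n))
              = Complex.abs (trigP B M α ((2:ℤ)^n) - trigP B M α ((2:ℤ)^m)) := by
            rw [← AbsoluteValue.map_neg Complex.abs]
            ring_nf
          rw [e3]
          linarith
  have hshift_half : (B:ℝ) * (13 * ε') ≤ gap / 2 := by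
    rw [hε']
    have h26 : (0:ℝ) < 26*((B:ℝ)+1) := by positivity
    rw [show (B:ℝ)*(13*(gap/(26*((B:ℝ)+1)))) = gap*(13*(B:ℝ))/(26*((B:ℝ)+1)) by push_cast; ring]
    rw [div_le_iff₀ h26]
    nlinarith [hgap_pos, Nat.cast_nonneg (α := ℝ) B]
  have hfinal : gap ≤ 39 * (2⁻¹:ℝ)^B + (B * (13 * ε')) + 39 * (2⁻¹:ℝ)^B :=
    le_trans hgaple htri
  nlinarith [hBpow, hshift_half, hgap_pos]
end
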